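/- Let C̄ be an F_q-conic in an F_q-subplane π̄ of PG(2,q^3) that is secant to ℓ∞. Then in the exact-at-infinity Bruck–Bose representation in PG(6,q), the variety V([C]) decomposes into a non-degenerate conic N_2, which lies in a plane of PG(6,q)∖Σ∞ meeting q+1 of the spread planes, together with two planes in Σ∞ (possibly repeated, and possibly lying in the extension Σ∞☆∖Σ∞). -/

import Mathlib

/-!
Common set-up: an explicit model of the Bruck-Bose representation of PG(2,q^3) in PG(6,q),
of the Bose representation of PG(2,q^3) in PG(8,q), and of their cubic and sextic
field extensions.

`Fq`, `F3`, `F6` are the fields of orders `q`, `q^3`, `q^6`.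

* PG(2,q^3) is `Projectivization F3 (Fin 3 → F3)`, with line at infinity `z = 0`.
* The ambient 7-dimensional `Fq`-space of PG(6,q) is `V6 = (Fin 2 → F3) × Fq`.
  Its extensions to `F3` and `F6` are modelled blockwise using the Galois splitting
  `F3 ⊗ F3 ≅ F3 × F3 × F3`:  `V63 = (Fin 3 → Fin 2 → F3) × F3` and
  `V66 = (Fin 3 → Fin 2 → F6) × F6`, with the Frobenius collineation acting by a cyclic
  shift of the blocks composed with coordinatewise q-th powers (`tauBB`).
* The hyperplane at infinity is `{v | v.2 = 0}`; the regular 2-spread consists of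
  the planes `{(l•(x,y),0) | l ∈ F3}`, whose extensions meet the transversal lines:
  the transversal line `g^{q^e}` is the set of vectors `gBlockVec e a b`.
* Similarly PG(8,q) has ambient `Fq`-space `Fin 3 → F3` with extensions
  `Fin 3 → Fin 3 → K` (`K = F3, F6`), the Bose spread plane of a point `(x:y:z)` being
  `{l•(x,y,z)}`; the transversal plane `Γ^{q^e}` is the block `e` (`GammaPlane e`),
  and a point `X̄ = (x:y:z)` of PG(2,q^3) corresponds to the point of `Γ` with vector
  `blockVec 0 ![x,y,z]`.
-/

noncomputable section
open scoped Classical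

/-- The projective point `P` is represented, up to a nonzero scalar, by the vector `w`. -/
def pe {K V : Type*} [DivisionRing K] [AddCommGroup V] [Module K V]
    (P : Projectivization K V) (w : V) : Prop :=
  ∃ c : K, c ≠ 0 ∧ P.rep = c • w

/-- `v ↦ B ⬝ v^q`, the vector form of a collineation `X ↦ B X^q`. -/
def cpiVec (q : ℕ) {K : Type*} [Field K] (B : Matrix (Fin 3) (Fin 3) K)
    (v : Fin 3 → K) : Fin 3 → K :=
  B.mulVec fun i => v i ^ q

/-- `v ↦ D ⬝ v^q` on a line (pairs of coordinates). -/
def cbVec (q : ℕ) {K : Type*} [Field K] (D : Matrix (Fin 2) (Fin 2) K)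
    (v : Fin 2 → K) : Fin 2 → K :=
  D.mulVec fun i => v i ^ q

/-- The vector of the Bruck-Bose ambient extension placing the pair `(a,b)` in
Galois block `e` (a vector on the transversal line `g^{q^e}`). -/
def gBlockVec {K : Type*} [Zero K] (e : Fin 3) (a b : K) : (Fin 3 → Fin 2 → K) × K :=
  (fun e' => if e' = e then ![a, b] else 0, 0)

/-- The Frobenius collineation `X ↦ X^q` on (extensions of) the Bruck-Bose ambient space. -/
def tauBB (q : ℕ) {K : Type*} [Field K] (w : (Fin 3 → Fin 2 → K) × K) :
    (Fin 3 → Fin 2 → K) × K :=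
  (fun e k => w.1 (e - 1) k ^ q, w.2 ^ q)

/-- The vector of the Bose ambient extension placing `u` in Galois block `e`. -/
def blockVec {K : Type*} [Zero K] (e : Fin 3) (u : Fin 3 → K) : Fin 3 → Fin 3 → K :=
  fun e' => if e' = e then u else 0

/-- The Frobenius collineation `X ↦ X^q` on (extensions of) the Bose ambient space. -/
def tauBose (q : ℕ) {K : Type*} [Field K] (w : Fin 3 → Fin 3 → K) : Fin 3 → Fin 3 → K :=
  fun e i => w (e - 1) i ^ q

/-- The transversal plane `Γ^{q^e}` of the Bose spread (as a set of vectors). -/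
def GammaPlane {K : Type*} [Zero K] (e : Fin 3) : Set (Fin 3 → Fin 3 → K) :=
  {w | ∀ e', e' ≠ e → w e' = 0}

/-- The scroll plane `⟪X⟫_π = ⟨X, (X^{c_π^5})^q, (X^{c_π^4})^{q^2}⟩` of the point `X ∈ Γ`
(or `Γ^{extension}`) with `Γ`-coordinate vector `u`, where `c_π` is given by the matrix `B`. -/
def scrollSub (q : ℕ) {K : Type*} [Field K] (B : Matrix (Fin 3) (Fin 3) K)
    (u : Fin 3 → K) : Submodule K (Fin 3 → Fin 3 → K) :=
  Submodule.span K
    {blockVec 0 u,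
     blockVec 1 (fun i => ((cpiVec q B)^[5] u) i ^ q),
     blockVec 2 (fun i => ((cpiVec q B)^[4] u) i ^ q ^ 2)}

/-- The `b`-scroll plane `⟪X⟫_b = ⟨X, (X^{c_b^5})^q, (X^{c_b^4})^{q^2}⟩` of the point `X` of
the transversal line `g` (or its extension) with coordinate pair `(a,b)`, where `c_b` is
given by the matrix `D`. -/
def bScrollSub (q : ℕ) {K : Type*} [Field K] (D : Matrix (Fin 2) (Fin 2) K)
    (a b : K) : Submodule K ((Fin 3 → Fin 2 → K) × K) :=
  Submodule.span K
    {gBlockVec 0 a b,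
     gBlockVec 1 (((cbVec q D)^[5] ![a, b]) 0 ^ q) (((cbVec q D)^[5] ![a, b]) 1 ^ q),
     gBlockVec 2 (((cbVec q D)^[4] ![a, b]) 0 ^ q ^ 2) (((cbVec q D)^[4] ![a, b]) 1 ^ q ^ 2)}

/-- `S` is a single point lying on one of the transversal planes (a T-point). -/
def IsTPointSet {K : Type*} [Field K]
    (S : Set (Projectivization K (Fin 3 → Fin 3 → K))) : Prop :=
  ∃ w : Fin 3 → Fin 3 → K, w ≠ 0 ∧ (∃ e, w ∈ GammaPlane e) ∧ S = {P | pe P w}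

/-- `S` is the point set of a T-line: a line meeting two of the transversal planes. -/
def IsTLineSet {K : Type*} [Field K]
    (S : Set (Projectivization K (Fin 3 → Fin 3 → K))) : Prop :=
  ∃ (e e' : Fin 3) (u u' : Fin 3 → Fin 3 → K), e ≠ e' ∧ u ≠ 0 ∧ u' ≠ 0 ∧
    u ∈ GammaPlane e ∧ u' ∈ GammaPlane e' ∧
    S = {P | ∃ s t : K, P.rep = s • u + t • u'}

/-- `S` is the point set of a T-plane: a plane meeting all three transversal planes. -/
def IsTPlaneSet {K : Type*} [Field K]
    (S : Set (Projectivization K (Fin 3 → Fin 3 → K))) : Prop :=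
  ∃ u : Fin 3 → Fin 3 → Fin 3 → K, (∀ e, u e ∈ GammaPlane e) ∧ LinearIndependent K u ∧
    S = {P | P.rep ∈ Submodule.span K (Set.range u)}

/-- `S` is empty, a T-point, a T-line or a T-plane. -/
def TClass {K : Type*} [Field K]
    (S : Set (Projectivization K (Fin 3 → Fin 3 → K))) : Prop :=
  S = ∅ ∨ IsTPointSet S ∨ IsTLineSet S ∨ IsTPlaneSet S

/-- `ζ` : the linear embedding of the (extended) Bruck-Bose ambient space into the
(extended) Bose ambient space, realising PG(6,q) as the 6-space `Σ_{6,q}` of PG(8,q). -/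
def zetaBB {K : Type*} [Field K] (w : (Fin 3 → Fin 2 → K) × K) : Fin 3 → Fin 3 → K :=
  fun e => ![w.1 e 0, w.1 e 1, w.2]

section BruckBose

variable (Fq F3 F6 : Type) [Field Fq] [Field F3] [Field F6]
  [Fintype Fq] [Fintype F3] [Fintype F6]
  [Algebra Fq F3] [Algebra F3 F6] [Algebra Fq F6] [IsScalarTower Fq F3 F6]

/-- The points of `PG(2,q^3)`. -/
abbrev Pt2 := Projectivization F3 (Fin 3 → F3)

/-- The points of the quadratic extension `PG(2,q^6)`. -/
abbrev Pt2e := Projectivization F6 (Fin 3 → F6)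

/-- The line at infinity `ℓ∞` of `PG(2,q^3)`. -/
def linf : Set (Pt2 F3) := {P | P.rep 2 = 0}

/-- The extended line at infinity `ℓ∞⁺⁺` of `PG(2,q^6)`. -/
def linfe : Set (Pt2e F6) := {P | P.rep 2 = 0}

/-- Representing vectors of the image under `M` of the standard `F_q`-subplane. -/
def subplaneVecs (M : Matrix (Fin 3) (Fin 3) F3) : Set (Fin 3 → F3) :=
  {u | ∃ a : Fin 3 → Fq, u = M.mulVec fun i => algebraMap Fq F3 (a i)}

/-- The `F_q`-subplane `π̄` of `PG(2,q^3)` determined by the invertible matrix `M`: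
the image under `M` of the standard rational subplane.  (Every `F_q`-subplane arises
in this way.) -/
def subplaneOf (M : Matrix (Fin 3) (Fin 3) F3) : Set (Pt2 F3) :=
  {P | ∃ u ∈ subplaneVecs Fq F3 M, pe P u}

/-- Representing vectors of the image under `M` of the standard `F_q`-conic. -/
def conicVecs (M : Matrix (Fin 3) (Fin 3) F3) : Set (Fin 3 → F3) :=
  {u | (∃ θ : Fq, u = M.mulVec fun i => algebraMap Fq F3 (![1, θ, θ ^ 2] i)) ∨
    u = M.mulVec ![0, 0, 1]}

/-- The `F_q`-conic `C̄` of `PG(2,q^3)` determined by the invertible matrix `M`: the image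
under `M` of the standard conic of the standard rational subplane.  (Every `F_q`-conic of
an `F_q`-subplane arises this way.) -/
def conicOf (M : Matrix (Fin 3) (Fin 3) F3) : Set (Pt2 F3) :=
  {P | ∃ u ∈ conicVecs Fq F3 M, pe P u}

/-- Representing vectors of `C̄⁺`, the unique `F_{q^3}`-conic containing `C̄ = conicOf M`. -/
def conicPlusVecs (M : Matrix (Fin 3) (Fin 3) F3) : Set (Fin 3 → F3) :=
  {u | (∃ θ : F3, u = M.mulVec ![1, θ, θ ^ 2]) ∨ u = M.mulVec ![0, 0, 1]}

/-- `C̄⁺`, the unique non-degenerate conic of `PG(2,q^3)` containing `C̄ = conicOf M`. -/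
def conicPlusOf (M : Matrix (Fin 3) (Fin 3) F3) : Set (Pt2 F3) :=
  {P | ∃ u ∈ conicPlusVecs F3 M, pe P u}

/-- Representing vectors of `C̄⁺⁺`, the unique conic of `PG(2,q^6)` containing `C̄⁺`. -/
def conicPPVecs (M : Matrix (Fin 3) (Fin 3) F3) : Set (Fin 3 → F6) :=
  {u | (∃ θ : F6, u = (M.map (algebraMap F3 F6)).mulVec ![1, θ, θ ^ 2]) ∨
    u = (M.map (algebraMap F3 F6)).mulVec ![0, 0, 1]}

/-- `C̄⁺⁺`, the unique conic of the quadratic extension `PG(2,q^6)` containing `C̄⁺`. -/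
def conicPPOf (M : Matrix (Fin 3) (Fin 3) F3) : Set (Pt2e F6) :=
  {P | ∃ u ∈ conicPPVecs F3 F6 M, pe P u}

/-- The subplane determined by `M` is secant to `ℓ∞` (meets it in `q+1` points). -/
def SecantSubplane (M : Matrix (Fin 3) (Fin 3) F3) : Prop :=
  (subplaneOf Fq F3 M ∩ linf F3).ncard = Fintype.card Fq + 1

/-- The subplane determined by `M` is tangent to `ℓ∞` (meets it in exactly one point). -/
def TangentSubplane (M : Matrix (Fin 3) (Fin 3) F3) : Prop :=
  (subplaneOf Fq F3 M ∩ linf F3).ncard = 1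

/-- The subplane determined by `M` is exterior to `ℓ∞` (disjoint from it). -/
def ExteriorSubplane (M : Matrix (Fin 3) (Fin 3) F3) : Prop :=
  subplaneOf Fq F3 M ∩ linf F3 = ∅

/-- The collineation `X ↦ B X^q` is a generator of the unique order-3 collineation group of
`PG(2,q^3)` fixing the subplane `subplaneOf M` pointwise (i.e. it is `c̄_π` or `c̄_π²`). -/
def IsCpiGen (M B : Matrix (Fin 3) (Fin 3) F3) : Prop :=
  IsUnit B.det ∧
  (∀ P ∈ subplaneOf Fq F3 M, pe P (cpiVec (Fintype.card Fq) B P.rep)) ∧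
  (∀ P : Pt2 F3, pe P ((cpiVec (Fintype.card Fq) B)^[3] P.rep)) ∧
  (∃ P : Pt2 F3, ¬ pe P (cpiVec (Fintype.card Fq) B P.rep))

/-- The map `X ↦ D X^q` on `ℓ∞` (coordinatised by pairs) is a generator of the unique
order-3 collineation group of `ℓ∞` fixing the `F_q`-subline `b̄ = subplaneOf M ∩ ℓ∞`
pointwise. -/
def IsCbGen (M : Matrix (Fin 3) (Fin 3) F3) (D : Matrix (Fin 2) (Fin 2) F3) : Prop :=
  IsUnit D.det ∧
  (∀ P ∈ subplaneOf Fq F3 M ∩ linf F3,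
    ∃ c : F3, c ≠ 0 ∧
      cbVec (Fintype.card Fq) D ![P.rep 0, P.rep 1] = c • ![P.rep 0, P.rep 1]) ∧
  (∀ u : Fin 2 → F3, u ≠ 0 → ∃ c : F3, c ≠ 0 ∧ (cbVec (Fintype.card Fq) D)^[3] u = c • u) ∧
  (∃ u : Fin 2 → F3, u ≠ 0 ∧ ¬ ∃ c : F3, c ≠ 0 ∧ cbVec (Fintype.card Fq) D u = c • u)

/-- `P' = P^{c̄_π}` where `c̄_π : X ↦ B X^q`. -/
def cptRel (B : Matrix (Fin 3) (Fin 3) F3) (P P' : Pt2 F3) : Prop :=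
  pe P' (cpiVec (Fintype.card Fq) B P.rep)

/-- `E` is one of the two `(π̄,ℓ∞)`-carriers lying on `ℓ∞` (for `π̄` exterior to `ℓ∞`):
`E ∈ ℓ∞` and the image of `E` under `c̄_π` or `c̄_π²` again lies on `ℓ∞`. -/
def IsCarrierOnLinf (B : Matrix (Fin 3) (Fin 3) F3) (E : Pt2 F3) : Prop :=
  E ∈ linf F3 ∧ ∃ E1 : Pt2 F3, cptRel Fq F3 B E E1 ∧ E1 ∈ linf F3

/-! ### The Bruck-Bose ambient spaces -/

/-- The 7-dimensional `Fq`-vector space underlying `PG(6,q)`. -/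
abbrev V6 := (Fin 2 → F3) × Fq

/-- The points of `PG(6,q)`. -/
abbrev Pt6 := Projectivization Fq (V6 Fq F3)

/-- The cubic extension of `V6`, underlying `PG(6,q^3)`. -/
abbrev V63 := (Fin 3 → Fin 2 → F3) × F3

/-- The points of `PG(6,q^3)`. -/
abbrev Pt63 := Projectivization F3 (V63 F3)

/-- The sextic extension of `V6`, underlying `PG(6,q^6)`. -/
abbrev V66 := (Fin 3 → Fin 2 → F6) × F6

/-- The points of `PG(6,q^6)`. -/
abbrev Pt66 := Projectivization F6 (V66 F6)

/-- The hyperplane at infinity `Σ∞` of `PG(6,q)` (as a point set). -/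
def inf6 : Set (Pt6 Fq F3) := {P | P.rep.2 = 0}

/-- The extended hyperplane at infinity `Σ∞^*` in `PG(6,q^3)`. -/
def inf63 : Set (Pt63 F3) := {P | P.rep.2 = 0}

/-- The extended hyperplane at infinity `Σ∞^☆` in `PG(6,q^6)`. -/
def inf66 : Set (Pt66 F6) := {P | P.rep.2 = 0}

/-- The vectors of the spread plane corresponding to the point `(x : y : 0)` of `ℓ∞`. -/
def spreadVecs (x y : F3) : Set (V6 Fq F3) := {v | ∃ l : F3, v = (![l * x, l * y], 0)}

/-- The points of the plane `[P]` of the regular 2-spread `S` corresponding to the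
point `P̄ = (x : y : 0)` of `ℓ∞`. -/
def spreadPts (x y : F3) : Set (Pt6 Fq F3) := {P | P.rep ∈ spreadVecs Fq F3 x y}

/-- `s` is (the point set of) a plane of the regular 2-spread `S`. -/
def IsSpreadPlane (s : Set (Pt6 Fq F3)) : Prop :=
  ∃ x y : F3, ¬(x = 0 ∧ y = 0) ∧ s = spreadPts Fq F3 x y

/-- The embedding of `V6` into its cubic extension `V63`. -/
def iota6 (v : V6 Fq F3) : V63 F3 :=
  (fun e k => v.1 k ^ Fintype.card Fq ^ (e : ℕ), algebraMap Fq F3 v.2)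

/-- The embedding of `V6` into its sextic extension `V66`. -/
def iota66 (v : V6 Fq F3) : V66 F6 :=
  (fun e k => algebraMap F3 F6 (v.1 k ^ Fintype.card Fq ^ (e : ℕ)), algebraMap Fq F6 v.2)

/-- The embedding of `V63` into `V66`. -/
def kappa6 (w : V63 F3) : V66 F6 :=
  (fun e k => algebraMap F3 F6 (w.1 e k), algebraMap F3 F6 w.2)

/-- A representing vector of `P^{q^e}` where `P` is the point of the transversal line `g`
with coordinate pair `(a,b) ∈ F_{q^3}²`. -/
def gOrbitVec3 (a b : F3) (e : Fin 3) : V63 F3 :=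
  gBlockVec e (a ^ Fintype.card Fq ^ (e : ℕ)) (b ^ Fintype.card Fq ^ (e : ℕ))

/-- A representing vector of `P^{q^e}` where `P` is the point of the extended transversal
line `g^☆` with coordinate pair `(a,b) ∈ F_{q^6}²`. -/
def gOrbitVec6 (a b : F6) (e : ℕ) : V66 F6 :=
  gBlockVec (Fin.ofNat 3 e) (a ^ Fintype.card Fq ^ e) (b ^ Fintype.card Fq ^ e)

/-- The vectors of the extension to `PG(6,q^3)` of the spread plane of `(x : y : 0)`. -/
def extSpreadVecs3 (x y : F3) : Set (V63 F3) :=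
  {w | ∃ c : Fin 3 → F3, w = (fun e =>
    ![c e * x ^ Fintype.card Fq ^ (e : ℕ), c e * y ^ Fintype.card Fq ^ (e : ℕ)], 0)}

/-- The vectors of the extension to `PG(6,q^6)` of the spread plane of `(x : y : 0)`. -/
def extSpreadVecs6 (x y : F3) : Set (V66 F6) :=
  {w | ∃ c : Fin 3 → F6, w = (fun e =>
    ![c e * algebraMap F3 F6 (x ^ Fintype.card Fq ^ (e : ℕ)),
      c e * algebraMap F3 F6 (y ^ Fintype.card Fq ^ (e : ℕ))], 0)}

/-- The point set in `PG(6,q)` of the `k`-dimensional normal rational curve with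
parametrising vectors `v 0, …, v k`:  `{(1,θ,…,θ^k)} ∪ {(0,…,0,1)}` in the frame `v`. -/
def nrcPts6 {k : ℕ} (v : Fin (k + 1) → V6 Fq F3) : Set (Pt6 Fq F3) :=
  {P | (∃ θ : Fq, pe P (∑ i : Fin (k + 1), θ ^ (i : ℕ) • v i)) ∨ pe P (v (Fin.last k))}

/-- The point set in `PG(6,q^3)` of the extension of the normal rational curve `v`. -/
def nrcPts63 {k : ℕ} (v : Fin (k + 1) → V6 Fq F3) : Set (Pt63 F3) :=
  {P | (∃ θ : F3, pe P (∑ i : Fin (k + 1), θ ^ (i : ℕ) • iota6 Fq F3 (v i))) ∨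
    pe P (iota6 Fq F3 (v (Fin.last k)))}

/-- The point set in `PG(6,q^6)` of the extension of the normal rational curve `v`. -/
def nrcPts66 {k : ℕ} (v : Fin (k + 1) → V6 Fq F3) : Set (Pt66 F6) :=
  {P | (∃ θ : F6, pe P (∑ i : Fin (k + 1), θ ^ (i : ℕ) • iota66 Fq F3 F6 (v i))) ∨
    pe P (iota66 Fq F3 F6 (v (Fin.last k)))}

/-- `N` is a `k`-dimensional normal rational curve of `PG(6,q)`. -/
def IsNRC (k : ℕ) (N : Set (Pt6 Fq F3)) : Prop :=
  ∃ v : Fin (k + 1) → V6 Fq F3, LinearIndependent Fq v ∧ N = nrcPts6 Fq F3 v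

/-- The exact-at-infinity Bruck-Bose representation `[C]` of a point set `C` of
`PG(2,q^3)`: affine points go to affine points, and a point of `ℓ∞` goes to the whole
corresponding spread plane. -/
def bbExact (C : Set (Pt2 F3)) : Set (Pt6 Fq F3) :=
  {Q | ∃ P ∈ C, (∃ x y : F3, pe P ![x, y, 1] ∧ pe Q (![x, y], (1 : Fq))) ∨
    (∃ x y : F3, pe P ![x, y, 0] ∧ Q ∈ spreadPts Fq F3 x y)}

/-- `N` is the Bruck-Bose representation (usual convention: linear components at infinity
ignored) of the point set `C` of `PG(2,q^3)`: `N` is contained in the exact-at-infinity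
representation of `C` and contains all of its affine points. -/
def corrBB (C : Set (Pt2 F3)) (N : Set (Pt6 Fq F3)) : Prop :=
  N ⊆ bbExact Fq F3 C ∧ ∀ Q ∈ bbExact Fq F3 C, Q ∉ inf6 Fq F3 → Q ∈ N

/-! ### The Bose ambient spaces -/

/-- The points of `PG(8,q^3)`. -/
abbrev Pt93 := Projectivization F3 (Fin 3 → Fin 3 → F3)

/-- The points of `PG(8,q^6)`. -/
abbrev Pt96 := Projectivization F6 (Fin 3 → Fin 3 → F6)

/-- The vectors of `Π_g^* = ⟨g, g^q, g^{q^2}⟩` in `PG(8,q^3)`, where `g` is the line of the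
transversal plane `Γ` corresponding to the line `l` of `PG(2,q^3)`. -/
def PiG3 (l : Submodule F3 (Fin 3 → F3)) : Set (Fin 3 → Fin 3 → F3) :=
  {w | ∀ e : Fin 3, ∃ v ∈ l, w e = fun i => v i ^ Fintype.card Fq ^ (e : ℕ)}

/-- The vectors of `Π_g^☆` in `PG(8,q^6)`. -/
def PiG6 (l : Submodule F3 (Fin 3 → F3)) : Set (Fin 3 → Fin 3 → F6) :=
  {w | ∀ e : Fin 3, w e ∈ Submodule.span F6
    {u : Fin 3 → F6 | ∃ v ∈ l, u = fun i => algebraMap F3 F6 (v i) ^ Fintype.card Fq ^ (e : ℕ)}}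

/-- The extension to `PG(2,q^6)` of the line `l` of `PG(2,q^3)`. -/
def extLineF6 (l : Submodule F3 (Fin 3 → F3)) : Submodule F6 (Fin 3 → F6) :=
  Submodule.span F6 {u | ∃ v ∈ l, u = fun i => algebraMap F3 F6 (v i)}

/-- The vectors of the point set of `V(⟦C⟧)^*` in `PG(8,q^3)` for the `F_q`-conic of `M`:
the union of the `π`-scroll planes of the points of `C⁺` (with `c_π` given by `B`). -/
def boseVar3 (M B : Matrix (Fin 3) (Fin 3) F3) : Set (Fin 3 → Fin 3 → F3) :=
  {w | ∃ u ∈ conicPlusVecs F3 M, w ∈ scrollSub (Fintype.card Fq) B u}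

/-- The vectors of the point set of `V(⟦C⟧)^☆` in `PG(8,q^6)`: the union of the
`π`-scroll planes of the points of `C⁺⁺`. -/
def boseVar6 (M B : Matrix (Fin 3) (Fin 3) F3) : Set (Fin 3 → Fin 3 → F6) :=
  {w | ∃ u ∈ conicPPVecs F3 F6 M,
    w ∈ scrollSub (Fintype.card Fq) (B.map (algebraMap F3 F6)) u}

/-- The point set of the variety-extension `V([C])^*` in `PG(6,q^3)`:
`V(⟦C⟧)^* ∩ Σ_{6,q}^*`, transported to the Bruck-Bose model via `ζ`. -/
def bbVar3 (M B : Matrix (Fin 3) (Fin 3) F3) : Set (Pt63 F3) :=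
  {P | zetaBB P.rep ∈ boseVar3 Fq F3 M B}

/-- The point set of the variety-extension `V([C])^☆` in `PG(6,q^6)`. -/
def bbVar6 (M B : Matrix (Fin 3) (Fin 3) F3) : Set (Pt66 F6) :=
  {P | zetaBB P.rep ∈ boseVar6 Fq F3 F6 M B}

/-- `L` is a T-line of `Σ∞^*`: a line meeting two of the transversal lines `g,g^q,g^{q^2}`
of the regular 2-spread. -/
def IsTLineBB (L : Submodule F3 (V63 F3)) : Prop :=
  ∃ (e e' : Fin 3) (a b a' b' : F3), e ≠ e' ∧ ¬(a = 0 ∧ b = 0) ∧ ¬(a' = 0 ∧ b' = 0) ∧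
    L = Submodule.span F3 {gBlockVec e a b, gBlockVec e' a' b'}

/-- The T-line `h^{q^e}` where `h = E (E^{c_π})^{q^2}`, `E` (resp. `E^{c_π}`) being the point
of the transversal `g` with coordinate pair `(a,b)` (resp. `(a',b')`). -/
def hLine (a b a' b' : F3) (e : Fin 3) : Submodule F3 (V63 F3) :=
  Submodule.span F3
    {gBlockVec e (a ^ Fintype.card Fq ^ (e : ℕ)) (b ^ Fintype.card Fq ^ (e : ℕ)),
     gBlockVec (e + 2) (a' ^ Fintype.card Fq ^ ((e : ℕ) + 2))
       (b' ^ Fintype.card Fq ^ ((e : ℕ) + 2))}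

/-! ### 3-special normal rational curves -/

/-- The pair `(a,b) ∈ F_{q^6}²` is proportional to an `F_{q^3}`-rational pair, i.e. the
corresponding point of the extended transversal line `g^☆` lies on `g`. -/
def rationalPair (a b : F6) : Prop :=
  ∃ (a0 b0 : F3) (c : F6), c ≠ 0 ∧ a = c * algebraMap F3 F6 a0 ∧ b = c * algebraMap F3 F6 b0

/-- The weight `w(P)` of a point `P` of `PG(5,q^6)` (given by a representing vector `w`):
1 if `P` is on an extended transversal line of the spread, 2 if not but `P` is on a line
meeting two of the extended transversal lines, 3 otherwise. -/
def weightV (w : V66 F6) : ℕ :=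
  if ∃ (e : Fin 3) (a b : F6), w = gBlockVec e a b then 1
  else if ∃ (e e' : Fin 3) (a b a' b' s t : F6), e ≠ e' ∧
      w = s • gBlockVec e a b + t • gBlockVec e' a' b' then 2
  else 3

/-- The orbit size `o(P)` of the point with representing vector `w` under the Frobenius
collineation `X ↦ X^q`. -/
def orbitSizeV (w : V66 F6) : ℕ :=
  Set.ncard {Q : Pt66 F6 | ∃ n : ℕ, pe Q ((tauBB (Fintype.card Fq))^[n] w)}

/-- `s(P) = 1` if `P` lies in an extended plane of the spread `S`, else `s(P) = 2`. -/
def sValV (w : V66 F6) : ℕ :=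
  if ∃ x y : F3, ¬(x = 0 ∧ y = 0) ∧ w ∈ extSpreadVecs6 Fq F3 F6 x y then 1 else 2

/-- The point of `PG(5,q^6)` with representing vector `w` is `S`-happy:
`w(P) ⬝ o(P) = 3 s(P)`. -/
def HappyV (w : V66 F6) : Prop :=
  weightV F6 w * orbitSizeV Fq F6 w = 3 * sValV Fq F3 F6 w

/-- The polynomial whose homogeneous roots give the points at infinity of the normal
rational curve parametrised by `v` (the last coordinates of the frame). -/
def infPoly {k : ℕ} (v : Fin (k + 1) → V6 Fq F3) : Polynomial Fq :=
  ∑ i : Fin (k + 1), Polynomial.C (v i).2 * Polynomial.X ^ (i : ℕ)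

/-- The parametrised normal rational curve `v` is 3-special with respect to the regular
2-spread `S`: it is not contained in `Σ∞`, all its points at infinity (with multiplicity,
including the point at the infinite parameter value) are defined over `F_{q^6}` and are
`S`-happy, and their weights sum to 6. -/
def Is3SpecialData {k : ℕ} (v : Fin (k + 1) → V6 Fq F3) : Prop :=
  infPoly Fq F3 v ≠ 0 ∧
  ((infPoly Fq F3 v).map (algebraMap Fq F6)).roots.card =
    ((infPoly Fq F3 v).map (algebraMap Fq F6)).natDegree ∧
  (∀ θ ∈ ((infPoly Fq F3 v).map (algebraMap Fq F6)).roots,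
    HappyV Fq F3 F6 (∑ i : Fin (k + 1), θ ^ (i : ℕ) • iota66 Fq F3 F6 (v i))) ∧
  (((infPoly Fq F3 v).map (algebraMap Fq F6)).natDegree < k →
    HappyV Fq F3 F6 (iota66 Fq F3 F6 (v (Fin.last k)))) ∧
  (((infPoly Fq F3 v).map (algebraMap Fq F6)).roots.map fun θ =>
      weightV F6 (∑ i : Fin (k + 1), θ ^ (i : ℕ) • iota66 Fq F3 F6 (v i))).sum +
    (k - ((infPoly Fq F3 v).map (algebraMap Fq F6)).natDegree) *
      weightV F6 (iota66 Fq F3 F6 (v (Fin.last k))) = 6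

/-- `N` is a 3-special `k`-dimensional normal rational curve of `PG(6,q)` with respect to
the regular 2-spread `S`. -/
def Is3Special (k : ℕ) (N : Set (Pt6 Fq F3)) : Prop :=
  ∃ v : Fin (k + 1) → V6 Fq F3, LinearIndependent Fq v ∧ N = nrcPts6 Fq F3 v ∧
    Is3SpecialData Fq F3 F6 v

end BruckBose
section AuxPe

variable {K V : Type*} [Field K] [AddCommGroup V] [Module K V]

theorem pe_nonzero {P : Projectivization K V} {w : V} (h : pe P w) : w ≠ 0 := by
  obtain ⟨c, hc, hr⟩ := h
  intro h0
  exact P.rep_nonzero (by rw [hr, h0, smul_zero])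

theorem pe_mk {w : V} (hw : w ≠ 0) : pe (Projectivization.mk K w hw) w := by
  have h := Projectivization.mk_rep (Projectivization.mk K w hw)
  rw [Projectivization.mk_eq_mk_iff] at h
  obtain ⟨a, ha⟩ := h
  exact ⟨a, a.ne_zero, by rw [← ha, Units.smul_def]⟩

theorem pe_smul_iff {P : Projectivization K V} {w : V} {c : K} (hc : c ≠ 0) :
    pe P (c • w) ↔ pe P w := by
  constructor
  · rintro ⟨d, hd, h⟩
    exact ⟨d * c, mul_ne_zero hd hc, by rw [h, smul_smul]⟩
  · rintro ⟨d, hd, h⟩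
    refine ⟨d * c⁻¹, mul_ne_zero hd (inv_ne_zero hc), ?_⟩
    rw [h, smul_smul, mul_assoc, inv_mul_cancel₀ hc, mul_one]

theorem pe_unique {P : Projectivization K V} {w w' : V} (h : pe P w) (h' : pe P w') :
    ∃ c : K, c ≠ 0 ∧ w' = c • w := by
  obtain ⟨c, hc, hr⟩ := h
  obtain ⟨d, hd, hr'⟩ := h'
  refine ⟨d⁻¹ * c, mul_ne_zero (inv_ne_zero hd) hc, ?_⟩
  rw [← smul_smul, ← hr, hr', smul_smul, inv_mul_cancel₀ hd, one_smul]

theorem pe_eq {P P' : Projectivization K V} {w : V} (h : pe P w) (h' : pe P' w) : P = P' := by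
  obtain ⟨c, hc, hr⟩ := h
  obtain ⟨d, hd, hr'⟩ := h'
  rw [← Projectivization.mk_rep P, ← Projectivization.mk_rep P']
  rw [Projectivization.mk_eq_mk_iff]
  refine ⟨Units.mk0 (c * d⁻¹) (mul_ne_zero hc (inv_ne_zero hd)), ?_⟩
  rw [Units.smul_def, Units.val_mk0, hr', hr, smul_smul, mul_assoc, inv_mul_cancel₀ hd, mul_one]

theorem projectivization_finite {K V : Type*} [DivisionRing K] [AddCommGroup V] [Module K V]
    [Finite V] : Finite (Projectivization K V) := by
  apply Finite.of_surjective (fun v : {v : V // v ≠ 0} => Projectivization.mk K v.1 v.2)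
  intro P
  exact ⟨⟨P.rep, P.rep_nonzero⟩, P.mk_rep⟩

end AuxPe

section AuxSpread

variable {Fq F3 : Type} [Field Fq] [Field F3] [Algebra Fq F3]

theorem spreadVecs_smul {c : F3} (hc : c ≠ 0) (x y : F3) :
    spreadVecs Fq F3 (c * x) (c * y) = spreadVecs Fq F3 x y := by
  ext v
  constructor
  · rintro ⟨l, rfl⟩
    refine ⟨l * c, ?_⟩
    rw [mul_assoc, mul_assoc]
  · rintro ⟨l, rfl⟩
    refine ⟨l * c⁻¹, ?_⟩
    have h : ∀ a : F3, l * a = l * c⁻¹ * (c * a) := by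
      intro a; field_simp
    rw [← h x, ← h y]

theorem spreadPts_smul {c : F3} (hc : c ≠ 0) (x y : F3) :
    spreadPts Fq F3 (c * x) (c * y) = spreadPts Fq F3 x y := by
  unfold spreadPts
  rw [spreadVecs_smul hc]

end AuxSpread
set_option linter.unusedSectionVars false

section AuxW

/-- Linear parametrisation of the extension of a spread plane. -/
def Wlin (q : ℕ) (F6 : Type) [Field F6] (z : Fin 2 → F6) :
    (Fin 3 → F6) →ₗ[F6] (Fin 3 → Fin 2 → F6) × F6 where
  toFun c := (fun e k => c e * z k ^ q ^ (e : ℕ), 0)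
  map_add' a b := by
    refine Prod.ext ?_ (by simp)
    funext e k
    simp [add_mul]
  map_smul' m a := by
    refine Prod.ext ?_ (by simp)
    funext e k
    simp [mul_assoc]

theorem Wlin_inj (q : ℕ) (F6 : Type) [Field F6] {z : Fin 2 → F6} {k0 : Fin 2}
    (hz : z k0 ≠ 0) : Function.Injective (Wlin q F6 z) := by
  rw [← LinearMap.ker_eq_bot, LinearMap.ker_eq_bot']
  intro c hc
  funext e
  have h := congrFun (congrFun (congrArg Prod.fst hc) e) k0
  simp only [Wlin, LinearMap.coe_mk, AddHom.coe_mk, Prod.fst_zero, Pi.zero_apply] at h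
  rcases mul_eq_zero.mp h with h' | h'
  · exact h'
  · exact absurd h' (pow_ne_zero _ hz)

theorem Wlin_finrank (q : ℕ) (F6 : Type) [Field F6] {z : Fin 2 → F6} {k0 : Fin 2}
    (hz : z k0 ≠ 0) :
    Module.finrank F6 (LinearMap.range (Wlin q F6 z)) = 3 := by
  rw [LinearMap.finrank_range_of_inj (Wlin_inj q F6 hz)]
  simp

theorem Wlin_snd (q : ℕ) (F6 : Type) [Field F6] (z : Fin 2 → F6) :
    ∀ w ∈ LinearMap.range (Wlin q F6 z), (w : (Fin 3 → Fin 2 → F6) × F6).2 = 0 := by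
  rintro w ⟨c, rfl⟩
  rfl

/-- A plane with no rational points. -/
def W0lin (F6 : Type) [Field F6] : (Fin 3 → F6) →ₗ[F6] (Fin 3 → Fin 2 → F6) × F6 where
  toFun c := (![0, ![c 0, c 1], ![c 2, 0]], 0)
  map_add' a b := by
    refine Prod.ext ?_ (by simp)
    funext e k
    fin_cases e <;> fin_cases k <;> simp
  map_smul' m a := by
    refine Prod.ext ?_ (by simp)
    funext e k
    fin_cases e <;> fin_cases k <;> simp

theorem W0lin_inj (F6 : Type) [Field F6] : Function.Injective (W0lin F6) := by
  rw [← LinearMap.ker_eq_bot, LinearMap.ker_eq_bot']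
  intro c hc
  have h1 := congrFun (congrFun (congrArg Prod.fst hc) 1)
  have h2 := congrFun (congrFun (congrArg Prod.fst hc) 2)
  funext i
  fin_cases i
  · simpa [W0lin] using h1 0
  · simpa [W0lin] using h1 1
  · simpa [W0lin] using h2 0

theorem W0lin_finrank (F6 : Type) [Field F6] :
    Module.finrank F6 (LinearMap.range (W0lin F6)) = 3 := by
  rw [LinearMap.finrank_range_of_inj (W0lin_inj F6)]
  simp

theorem W0lin_snd (F6 : Type) [Field F6] :
    ∀ w ∈ LinearMap.range (W0lin F6), (w : (Fin 3 → Fin 2 → F6) × F6).2 = 0 := by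
  rintro w ⟨c, rfl⟩
  rfl

end AuxW
section AuxWRat

variable (Fq F3 F6 : Type) [Field Fq] [Field F3] [Field F6]
  [Fintype Fq] [Algebra Fq F3] [Algebra F3 F6] [Algebra Fq F6] [IsScalarTower Fq F3 F6]

theorem mem_Wplane_iota {x y : F3} (hxy : ¬(x = 0 ∧ y = 0)) (Q : Pt6 Fq F3) :
    iota66 Fq F3 F6 Q.rep ∈
      LinearMap.range (Wlin (Fintype.card Fq) F6 fun k => algebraMap F3 F6 (![x, y] k)) ↔
    Q ∈ spreadPts Fq F3 x y := by
  constructor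
  · rintro ⟨c, hc⟩
    have hsnd : Q.rep.2 = 0 := by
      have h := congrArg Prod.snd hc
      simp only [Wlin, LinearMap.coe_mk, AddHom.coe_mk, iota66] at h
      exact (algebraMap Fq F6).injective (by rw [← h, map_zero])
    have hblk : ∀ k : Fin 2, c 0 * algebraMap F3 F6 (![x, y] k) =
        algebraMap F3 F6 (Q.rep.1 k) := by
      intro k
      have h := congrFun (congrFun (congrArg Prod.fst hc) 0) k
      simpa [Wlin, iota66] using h
    have key : ∀ l : F3, Q.rep = (![l * x, l * y], 0) → Q ∈ spreadPts Fq F3 x y :=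
      fun l hl => ⟨l, hl⟩
    have hx0 := hblk 0
    have hy0 := hblk 1
    simp only [Matrix.cons_val_zero, Matrix.cons_val_one, Matrix.head_cons] at hx0 hy0
    rcases not_and_or.mp hxy with hx | hy
    · refine key (Q.rep.1 0 * x⁻¹) ?_
      have h1 : Q.rep.1 1 * x = Q.rep.1 0 * y := by
        apply (algebraMap F3 F6).injective
        rw [map_mul, map_mul, ← hx0, ← hy0]
        ring
      refine Prod.ext ?_ hsnd
      funext k
      fin_cases k
      · simp; field_simp
      · simp
        field_simp
        linear_combination h1
    · refine key (Q.rep.1 1 * y⁻¹) ?_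
      have h1 : Q.rep.1 0 * y = Q.rep.1 1 * x := by
        apply (algebraMap F3 F6).injective
        rw [map_mul, map_mul, ← hx0, ← hy0]
        ring
      refine Prod.ext ?_ hsnd
      funext k
      fin_cases k
      · simp
        field_simp
        linear_combination h1
      · simp; field_simp
  · rintro ⟨l, hl⟩
    refine ⟨fun e => algebraMap F3 F6 (l ^ Fintype.card Fq ^ (e : ℕ)), ?_⟩
    refine Prod.ext ?_ ?_
    · funext e k
      simp only [Wlin, LinearMap.coe_mk, AddHom.coe_mk, iota66, hl]
      fin_cases k <;>
        simp [← map_pow, ← map_mul, mul_pow]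
    · simp [Wlin, iota66, hl]

theorem W0_no_rational (Q : Pt6 Fq F3) :
    iota66 Fq F3 F6 Q.rep ∉ LinearMap.range (W0lin F6) := by
  rintro ⟨c, hc⟩
  have hsnd : Q.rep.2 = 0 := by
    have h := congrArg Prod.snd hc
    simp only [W0lin, LinearMap.coe_mk, AddHom.coe_mk, iota66] at h
    exact (algebraMap Fq F6).injective (by rw [← h, map_zero])
  have hfst : Q.rep.1 = 0 := by
    funext k
    have h := congrFun (congrFun (congrArg Prod.fst hc) 0) k
    simp only [W0lin, LinearMap.coe_mk, AddHom.coe_mk, iota66, Matrix.cons_val_zero,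
      Pi.zero_apply, Fin.val_zero, pow_zero, pow_one, Fin.isValue] at h
    simp only [Pi.zero_apply]
    exact (algebraMap F3 F6).injective (by rw [← h, map_zero])
  exact Q.rep_nonzero (Prod.ext hfst hsnd)

end AuxWRat
section AuxCross

theorem mulVec_eq_zero {F3 : Type} [Field F3] {M : Matrix (Fin 3) (Fin 3) F3}
    (hM : IsUnit M.det) {w : Fin 3 → F3} (h : M.mulVec w = 0) : w = 0 := by
  have h1 := Matrix.nonsing_inv_mul M hM
  calc w = (1 : Matrix (Fin 3) (Fin 3) F3).mulVec w := by rw [Matrix.one_mulVec]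
    _ = (M⁻¹ * M).mulVec w := by rw [h1]
    _ = M⁻¹.mulVec (M.mulVec w) := by rw [Matrix.mulVec_mulVec]
    _ = 0 := by rw [h, Matrix.mulVec_zero]

theorem mulVec_injective {F3 : Type} [Field F3] {M : Matrix (Fin 3) (Fin 3) F3}
    (hM : IsUnit M.det) {w w' : Fin 3 → F3} (h : M.mulVec w = M.mulVec w') : w = w' := by
  have h0 : M.mulVec (w - w') = 0 := by
    rw [Matrix.mulVec_sub, h, sub_self]
  have := mulVec_eq_zero hM h0
  exact sub_eq_zero.mp this

/-- Cross product of two vectors in `Fin 3 → Fq`. -/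
def cross3 {Fq : Type} [Field Fq] (a a' : Fin 3 → Fq) : Fin 3 → Fq :=
  ![a 1 * a' 2 - a 2 * a' 1, a 2 * a' 0 - a 0 * a' 2, a 0 * a' 1 - a 1 * a' 0]

theorem cross3_eq_zero {Fq : Type} [Field Fq] {a a' : Fin 3 → Fq}
    (ha : a ≠ 0) (hc : cross3 a a' = 0) : ∃ μ : Fq, a' = μ • a := by
  have h0 := congrFun hc 0
  have h1 := congrFun hc 1
  have h2 := congrFun hc 2
  simp only [cross3, Matrix.cons_val_zero, Matrix.cons_val_one, Matrix.head_cons,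
    Matrix.cons_val_two, Matrix.tail_cons, Pi.zero_apply] at h0 h1 h2
  have fin : ∀ (μ : Fq), a' 0 = μ * a 0 → a' 1 = μ * a 1 → a' 2 = μ * a 2 →
      ∃ μ : Fq, a' = μ • a := by
    intro μ e0 e1 e2
    refine ⟨μ, ?_⟩
    funext i
    simp only [Pi.smul_apply, smul_eq_mul]
    fin_cases i
    · exact e0
    · exact e1
    · exact e2
  by_cases ha0 : a 0 ≠ 0
  · refine fin (a' 0 / a 0) (by field_simp) ?_ ?_
    · field_simp
      first
      | linear_combination h2
      | linear_combination -h2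
    · field_simp
      first
      | linear_combination h1
      | linear_combination -h1
  push_neg at ha0
  by_cases ha1 : a 1 ≠ 0
  · refine fin (a' 1 / a 1) ?_ (by field_simp) ?_
    · field_simp
      first
      | linear_combination h2
      | linear_combination -h2
    · field_simp
      first
      | linear_combination h0
      | linear_combination -h0
  push_neg at ha1
  have ha2 : a 2 ≠ 0 := by
    intro ha2
    apply ha
    funext i
    fin_cases i
    · exact ha0
    · exact ha1
    · exact ha2
  refine fin (a' 2 / a 2) ?_ ?_ (by field_simp)
  · field_simp
    first
    | linear_combination h1
    | linear_combination -h1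
  · field_simp
    first
    | linear_combination h0
    | linear_combination -h0

end AuxCross
section AuxSecant

variable (Fq F3 : Type) [Field Fq] [Field F3] [Fintype Fq] [Fintype F3] [Algebra Fq F3]

theorem point_vec_rel {M : Matrix (Fin 3) (Fin 3) F3} (hM : IsUnit M.det)
    {P : Pt2 F3} (hP : P ∈ subplaneOf Fq F3 M ∩ linf F3) :
    ∃ a : Fin 3 → Fq, a ≠ 0 ∧
      pe P (M.mulVec fun i => algebraMap Fq F3 (a i)) ∧
      M 2 0 * algebraMap Fq F3 (a 0) + M 2 1 * algebraMap Fq F3 (a 1) +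
        M 2 2 * algebraMap Fq F3 (a 2) = 0 := by
  obtain ⟨⟨u, ⟨a, rfl⟩, hpe⟩, hPl⟩ := hP
  refine ⟨a, ?_, hpe, ?_⟩
  · intro h0
    apply pe_nonzero hpe
    rw [h0]
    funext i
    simp [Matrix.mulVec]
  · obtain ⟨c, hc, hr⟩ := hpe
    have h2 : P.rep 2 = 0 := hPl
    rw [hr] at h2
    simp only [Pi.smul_apply, smul_eq_mul] at h2
    have hu2 : M.mulVec (fun i => algebraMap Fq F3 (a i)) 2 = 0 := by
      rcases mul_eq_zero.mp h2 with h | h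
      · exact absurd h hc
      · exact h
    rw [show M.mulVec (fun i => algebraMap Fq F3 (a i)) 2 =
        M 2 0 * algebraMap Fq F3 (a 0) + M 2 1 * algebraMap Fq F3 (a 1) +
        M 2 2 * algebraMap Fq F3 (a 2) from by
      simp [Matrix.mulVec, dotProduct, Fin.sum_univ_three]] at hu2
    exact hu2

theorem secant_row {M : Matrix (Fin 3) (Fin 3) F3} (hM : IsUnit M.det)
    (hsec : SecantSubplane Fq F3 M) :
    ∃ lam : F3, lam ≠ 0 ∧ ∃ r : Fin 3 → Fq, r ≠ 0 ∧
      ∀ i, M 2 i = lam * algebraMap Fq F3 (r i) := by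
  haveI : Finite (Pt2 F3) := projectivization_finite
  -- two distinct points on the subline at infinity
  have hpos : 1 < (subplaneOf Fq F3 M ∩ linf F3).ncard := by
    rw [hsec]
    have := Fintype.card_pos (α := Fq)
    omega
  obtain ⟨P, hP⟩ : (subplaneOf Fq F3 M ∩ linf F3).Nonempty :=
    Set.nonempty_of_ncard_ne_zero (by omega)
  obtain ⟨P', hP', hne'⟩ := Set.exists_ne_of_one_lt_ncard hpos P
  have hne : P ≠ P' := hne'.symm
  obtain ⟨a, ha, hpe, rel⟩ := point_vec_rel Fq F3 hM hP
  obtain ⟨a', ha', hpe', rel'⟩ := point_vec_rel Fq F3 hM hP'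
  -- a and a' are not proportional
  have hprop : ∀ μ : Fq, a' ≠ μ • a := by
    intro μ hμ
    apply hne
    have hμ0 : μ ≠ 0 := by
      intro h0
      apply ha'
      rw [hμ, h0, zero_smul]
    have hvec : (M.mulVec fun i => algebraMap Fq F3 (a' i)) =
        algebraMap Fq F3 μ • (M.mulVec fun i => algebraMap Fq F3 (a i)) := by
      funext i
      simp only [hμ, Pi.smul_apply, smul_eq_mul, Matrix.mulVec, dotProduct,
        Fin.sum_univ_three, map_mul]
      ring
    rw [hvec] at hpe'
    have hμ3 : algebraMap Fq F3 μ ≠ 0 := fun h =>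
      hμ0 ((algebraMap Fq F3).injective (by rw [h, map_zero]))
    exact pe_eq hpe ((pe_smul_iff hμ3).mp hpe')
  -- the cross product is nonzero
  set c := cross3 a a' with hcdef
  have hc : c ≠ 0 := by
    intro h0
    obtain ⟨μ, hμ⟩ := cross3_eq_zero ha h0
    exact hprop μ hμ
  -- row 2 of M is proportional to alg c
  have e0 : c 0 = a 1 * a' 2 - a 2 * a' 1 := rfl
  have e1 : c 1 = a 2 * a' 0 - a 0 * a' 2 := rfl
  have e2 : c 2 = a 0 * a' 1 - a 1 * a' 0 := rfl
  have key01 : M 2 0 * algebraMap Fq F3 (c 1) = M 2 1 * algebraMap Fq F3 (c 0) := by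
    rw [e0, e1]
    simp only [map_sub, map_mul]
    first
    | linear_combination algebraMap Fq F3 (a' 2) * rel - algebraMap Fq F3 (a 2) * rel'
    | linear_combination algebraMap Fq F3 (a 2) * rel' - algebraMap Fq F3 (a' 2) * rel
  have key02 : M 2 0 * algebraMap Fq F3 (c 2) = M 2 2 * algebraMap Fq F3 (c 0) := by
    rw [e0, e2]
    simp only [map_sub, map_mul]
    first
    | linear_combination algebraMap Fq F3 (a' 1) * rel - algebraMap Fq F3 (a 1) * rel'
    | linear_combination algebraMap Fq F3 (a 1) * rel' - algebraMap Fq F3 (a' 1) * rel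
  have key12 : M 2 1 * algebraMap Fq F3 (c 2) = M 2 2 * algebraMap Fq F3 (c 1) := by
    rw [e1, e2]
    simp only [map_sub, map_mul]
    first
    | linear_combination algebraMap Fq F3 (a' 0) * rel - algebraMap Fq F3 (a 0) * rel'
    | linear_combination algebraMap Fq F3 (a 0) * rel' - algebraMap Fq F3 (a' 0) * rel
  have key : ∀ i j : Fin 3, M 2 i * algebraMap Fq F3 (c j) = M 2 j * algebraMap Fq F3 (c i) := by
    intro i j
    fin_cases i <;> fin_cases j
    · rfl
    · exact key01
    · exact key02
    · exact key01.symm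
    · rfl
    · exact key12
    · exact key02.symm
    · exact key12.symm
    · rfl
  obtain ⟨j, hj⟩ : ∃ j, c j ≠ 0 := Function.ne_iff.mp hc
  have hj3 : algebraMap Fq F3 (c j) ≠ 0 := fun h =>
    hj ((algebraMap Fq F3).injective (by rw [h, map_zero]))
  set lam := M 2 j * (algebraMap Fq F3 (c j))⁻¹ with hlamdef
  have hlam_eq : ∀ i, M 2 i = lam * algebraMap Fq F3 (c i) := by
    intro i
    rw [hlamdef]
    field_simp
    first
    | linear_combination key i j
    | linear_combination - key i j
    | linear_combination key j i
    | linear_combination - key j i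
  have hlam : lam ≠ 0 := by
    intro h0
    have hrow0 : ∀ i, M 2 i = 0 := by
      intro i
      rw [hlam_eq i, h0, zero_mul]
    exact (hM.ne_zero) (Matrix.det_eq_zero_of_row_eq_zero 2 hrow0)
  exact ⟨lam, hlam, c, hc, hlam_eq⟩

end AuxSecant
section AuxConic

variable (Fq F3 : Type) [Field Fq] [Field F3] [Fintype Fq] [Fintype F3] [Algebra Fq F3]

/-- The frame of the Bruck-Bose conic. -/
def vconic (M : Matrix (Fin 3) (Fin 3) F3) (lam : F3) (r : Fin 3 → Fq) : Fin 3 → V6 Fq F3 :=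
  fun i => (![lam⁻¹ * M 0 i, lam⁻¹ * M 1 i], r i)

theorem vconic_sum (M : Matrix (Fin 3) (Fin 3) F3) (lam : F3) (r : Fin 3 → Fq)
    (a : Fin 3 → Fq) :
    ∑ i : Fin 3, a i • vconic Fq F3 M lam r i =
      (![lam⁻¹ * (M.mulVec fun i => algebraMap Fq F3 (a i)) 0,
         lam⁻¹ * (M.mulVec fun i => algebraMap Fq F3 (a i)) 1],
       a 0 * r 0 + a 1 * r 1 + a 2 * r 2) := by
  refine Prod.ext ?_ ?_
  · funext k
    simp only [Fin.sum_univ_three, vconic, Prod.smul_mk, Prod.mk_add_mk, Prod.fst]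
    fin_cases k <;>
      simp [Matrix.mulVec, dotProduct, Fin.sum_univ_three, Algebra.smul_def] <;>
      ring
  · simp only [Fin.sum_univ_three, vconic, Prod.smul_mk, Prod.mk_add_mk, Prod.snd,
      smul_eq_mul]

theorem vconic_li (M : Matrix (Fin 3) (Fin 3) F3) (hM : IsUnit M.det)
    {lam : F3} (hlam : lam ≠ 0) (r : Fin 3 → Fq)
    (hrow : ∀ i, M 2 i = lam * algebraMap Fq F3 (r i)) :
    LinearIndependent Fq (vconic Fq F3 M lam r) := by
  rw [Fintype.linearIndependent_iff]
  intro g hg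
  rw [vconic_sum] at hg
  have h1 := congrArg Prod.fst hg
  have h2 := congrArg Prod.snd hg
  simp only [Prod.fst_zero, Prod.snd_zero] at h1 h2
  have hz : M.mulVec (fun i => algebraMap Fq F3 (g i)) = 0 := by
    funext i
    have hk : ∀ k : Fin 2, lam⁻¹ * (M.mulVec fun i => algebraMap Fq F3 (g i)) (k.castSucc) = 0 := by
      intro k
      have := congrFun h1 k
      fin_cases k <;> simpa using this
    fin_cases i
    · have := hk 0
      rcases mul_eq_zero.mp this with h | h
      · exact absurd h (inv_ne_zero hlam)
      · exact h
    · have := hk 1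
      rcases mul_eq_zero.mp this with h | h
      · exact absurd h (inv_ne_zero hlam)
      · exact h
    · show (M.mulVec fun i => algebraMap Fq F3 (g i)) 2 = 0
      have : (M.mulVec fun i => algebraMap Fq F3 (g i)) 2 =
          lam * algebraMap Fq F3 (g 0 * r 0 + g 1 * r 1 + g 2 * r 2) := by
        simp only [Matrix.mulVec, dotProduct, Fin.sum_univ_three, hrow, map_add, map_mul]
        ring
      rw [this, h2, map_zero, mul_zero]
  have hg0 : (fun i => algebraMap Fq F3 (g i)) = 0 := mulVec_eq_zero hM hz
  intro i
  have := congrFun hg0 i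
  simp only [Pi.zero_apply] at this
  exact (algebraMap Fq F3).injective (by rw [this, map_zero])

end AuxConic
section AuxH

variable (Fq F3 : Type) [Field Fq] [Field F3] [Fintype Fq] [Fintype F3] [Algebra Fq F3]

theorem alg_ne_zero {c : Fq} (hc : c ≠ 0) : algebraMap Fq F3 c ≠ 0 := fun h =>
  hc ((algebraMap Fq F3).injective (by rw [h, map_zero]))

theorem V6_eq {w w' : V6 Fq F3} (h0 : w.1 0 = w'.1 0) (h1 : w.1 1 = w'.1 1)
    (h2 : w.2 = w'.2) : w = w' := by
  refine Prod.ext ?_ h2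
  funext k
  fin_cases k
  · exact h0
  · exact h1

theorem smul_V6_fst (c : Fq) (w : V6 Fq F3) (k : Fin 2) :
    (c • w).1 k = algebraMap Fq F3 c * w.1 k := by
  rw [Prod.smul_fst, Pi.smul_apply, Algebra.smul_def]

theorem smul_V6_snd (c : Fq) (w : V6 Fq F3) : (c • w).2 = c * w.2 := rfl

theorem Asum_eq (M : Matrix (Fin 3) (Fin 3) F3) (lam : F3) (r : Fin 3 → Fq) (θ : Fq) :
    ∑ i : Fin 3, θ ^ (i : ℕ) • vconic Fq F3 M lam r i =
      (![lam⁻¹ * (M.mulVec fun i => algebraMap Fq F3 (![1, θ, θ ^ 2] i)) 0,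
         lam⁻¹ * (M.mulVec fun i => algebraMap Fq F3 (![1, θ, θ ^ 2] i)) 1],
       r 0 + r 1 * θ + r 2 * θ ^ 2) := by
  refine V6_eq Fq F3 ?_ ?_ ?_
  · simp only [Fin.sum_univ_three, vconic, Prod.fst_add, Pi.add_apply, smul_V6_fst,
      Matrix.cons_val_zero, Matrix.mulVec, dotProduct,
      Matrix.cons_val_one, Matrix.head_cons, Matrix.cons_val_two, Matrix.tail_cons,
      map_one, map_pow, Fin.val_zero, Fin.val_one, Fin.val_two, pow_zero, pow_one]
    ring
  · simp only [Fin.sum_univ_three, vconic, Prod.fst_add, Pi.add_apply, smul_V6_fst,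
      Matrix.cons_val_zero, Matrix.mulVec, dotProduct,
      Matrix.cons_val_one, Matrix.head_cons, Matrix.cons_val_two, Matrix.tail_cons,
      map_one, map_pow, Fin.val_zero, Fin.val_one, Fin.val_two, pow_zero, pow_one]
    ring
  · simp only [Fin.sum_univ_three, vconic, Prod.snd_add, smul_V6_snd,
      Fin.val_zero, Fin.val_one, Fin.val_two, pow_zero, pow_one]
    ring

theorem uvec_two (M : Matrix (Fin 3) (Fin 3) F3) (lam : F3) (r : Fin 3 → Fq)
    (hrow : ∀ i, M 2 i = lam * algebraMap Fq F3 (r i)) (θ : Fq) :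
    (M.mulVec fun i => algebraMap Fq F3 (![1, θ, θ ^ 2] i)) 2 =
      lam * algebraMap Fq F3 (r 0 + r 1 * θ + r 2 * θ ^ 2) := by
  simp only [Matrix.mulVec, dotProduct, Fin.sum_univ_three, hrow, map_add, map_mul,
    map_one, map_pow, Matrix.cons_val_zero, Matrix.cons_val_one, Matrix.head_cons,
    Matrix.cons_val_two, Matrix.tail_cons]
  ring

theorem uvec_ne (M : Matrix (Fin 3) (Fin 3) F3) (hM : IsUnit M.det) (θ : Fq) :
    (M.mulVec fun i => algebraMap Fq F3 (![1, θ, θ ^ 2] i)) ≠ 0 := by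
  intro h
  have h0 := congrFun (mulVec_eq_zero hM h) 0
  simp only [Pi.zero_apply, Matrix.cons_val_zero, map_one] at h0
  exact one_ne_zero h0

theorem ucol_ne (M : Matrix (Fin 3) (Fin 3) F3) (hM : IsUnit M.det) :
    (M.mulVec ![0, 0, 1]) ≠ 0 := by
  intro h
  have h0 := congrFun (mulVec_eq_zero hM h) 2
  simp only [Pi.zero_apply, Matrix.cons_val_two, Matrix.tail_cons, Matrix.head_cons] at h0
  exact one_ne_zero h0

theorem ucol_apply (M : Matrix (Fin 3) (Fin 3) F3) (i : Fin 3) :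
    (M.mulVec ![0, 0, 1]) i = M i 2 := by
  simp [Matrix.mulVec, dotProduct, Fin.sum_univ_three]

-- H1a : an affine nrc point is in the exact representation
theorem H1a (M : Matrix (Fin 3) (Fin 3) F3) (hM : IsUnit M.det)
    {lam : F3} (hlam : lam ≠ 0) (r : Fin 3 → Fq)
    (hrow : ∀ i, M 2 i = lam * algebraMap Fq F3 (r i)) (θ : Fq)
    (hf : r 0 + r 1 * θ + r 2 * θ ^ 2 ≠ 0) (Q : Pt6 Fq F3)
    (hQ : pe Q (∑ i : Fin 3, θ ^ (i : ℕ) • vconic Fq F3 M lam r i)) :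
    Q ∈ bbExact Fq F3 (conicOf Fq F3 M) := by
  have hu := uvec_ne Fq F3 M hM θ
  have hu2 := uvec_two Fq F3 M lam r hrow θ
  set u := M.mulVec fun i => algebraMap Fq F3 (![1, θ, θ ^ 2] i) with hudef
  have hu2ne : u 2 ≠ 0 := by
    rw [hu2]
    exact mul_ne_zero hlam (alg_ne_zero Fq F3 hf)
  refine ⟨Projectivization.mk F3 u hu, ⟨u, Or.inl ⟨θ, hudef⟩, pe_mk hu⟩,
    Or.inl ⟨(u 2)⁻¹ * u 0, (u 2)⁻¹ * u 1, ?_, ?_⟩⟩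
  · have heq : (![(u 2)⁻¹ * u 0, (u 2)⁻¹ * u 1, 1] : Fin 3 → F3) = (u 2)⁻¹ • u := by
      funext i
      fin_cases i
      · rfl
      · rfl
      · show (1 : F3) = (u 2)⁻¹ • u 2
        rw [smul_eq_mul, inv_mul_cancel₀ hu2ne]
    rw [heq, pe_smul_iff (inv_ne_zero hu2ne)]
    exact pe_mk hu
  · have heq : ((![(u 2)⁻¹ * u 0, (u 2)⁻¹ * u 1], (1 : Fq)) : V6 Fq F3) =
        (r 0 + r 1 * θ + r 2 * θ ^ 2)⁻¹ •
          (∑ i : Fin 3, θ ^ (i : ℕ) • vconic Fq F3 M lam r i) := by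
      rw [Asum_eq]
      refine (V6_eq Fq F3 ?_ ?_ ?_).symm
      · rw [smul_V6_fst]
        show algebraMap Fq F3 (r 0 + r 1 * θ + r 2 * θ ^ 2)⁻¹ * (lam⁻¹ * u 0) = (u 2)⁻¹ * u 0
        rw [map_inv₀, hu2, mul_inv_rev]
        ring
      · rw [smul_V6_fst]
        show algebraMap Fq F3 (r 0 + r 1 * θ + r 2 * θ ^ 2)⁻¹ * (lam⁻¹ * u 1) = (u 2)⁻¹ * u 1
        rw [map_inv₀, hu2, mul_inv_rev]
        ring
      · rw [smul_V6_snd]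
        show (r 0 + r 1 * θ + r 2 * θ ^ 2)⁻¹ * (r 0 + r 1 * θ + r 2 * θ ^ 2) = 1
        rw [inv_mul_cancel₀ hf]
    rw [heq, pe_smul_iff (inv_ne_zero hf)]
    exact hQ

-- H1b : an infinite nrc point lies in the corresponding spread plane
theorem H1b (M : Matrix (Fin 3) (Fin 3) F3)
    {lam : F3} (hlam : lam ≠ 0) (r : Fin 3 → Fq)
    (hrow : ∀ i, M 2 i = lam * algebraMap Fq F3 (r i)) (θ : Fq)
    (hf : r 0 + r 1 * θ + r 2 * θ ^ 2 = 0) (Q : Pt6 Fq F3)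
    (hQ : pe Q (∑ i : Fin 3, θ ^ (i : ℕ) • vconic Fq F3 M lam r i)) :
    Q ∈ spreadPts Fq F3 ((M.mulVec fun i => algebraMap Fq F3 (![1, θ, θ ^ 2] i)) 0)
      ((M.mulVec fun i => algebraMap Fq F3 (![1, θ, θ ^ 2] i)) 1) := by
  obtain ⟨c, hc, hr⟩ := hQ
  rw [Asum_eq, hf] at hr
  set u := M.mulVec fun i => algebraMap Fq F3 (![1, θ, θ ^ 2] i) with hudef
  refine ⟨algebraMap Fq F3 c * lam⁻¹, ?_⟩
  rw [hr]
  refine V6_eq Fq F3 ?_ ?_ ?_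
  · rw [smul_V6_fst]
    show algebraMap Fq F3 c * (lam⁻¹ * u 0) = algebraMap Fq F3 c * lam⁻¹ * u 0
    ring
  · rw [smul_V6_fst]
    show algebraMap Fq F3 c * (lam⁻¹ * u 1) = algebraMap Fq F3 c * lam⁻¹ * u 1
    ring
  · rw [smul_V6_snd]
    show c * 0 = (0 : Fq)
    rw [mul_zero]

-- H1c : the affine nrc point at the infinite parameter
theorem H1c (M : Matrix (Fin 3) (Fin 3) F3) (hM : IsUnit M.det)
    {lam : F3} (hlam : lam ≠ 0) (r : Fin 3 → Fq)
    (hrow : ∀ i, M 2 i = lam * algebraMap Fq F3 (r i))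
    (hr2 : r 2 ≠ 0) (Q : Pt6 Fq F3)
    (hQ : pe Q (vconic Fq F3 M lam r 2)) :
    Q ∈ bbExact Fq F3 (conicOf Fq F3 M) := by
  have hu := ucol_ne F3 M hM
  set u := M.mulVec ![0, 0, 1] with hudef
  have hu2 : u 2 = lam * algebraMap Fq F3 (r 2) := by
    rw [hudef, ucol_apply, hrow]
  have hu2ne : u 2 ≠ 0 := by
    rw [hu2]
    exact mul_ne_zero hlam (alg_ne_zero Fq F3 hr2)
  refine ⟨Projectivization.mk F3 u hu, ⟨u, Or.inr hudef, pe_mk hu⟩,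
    Or.inl ⟨(u 2)⁻¹ * u 0, (u 2)⁻¹ * u 1, ?_, ?_⟩⟩
  · have heq : (![(u 2)⁻¹ * u 0, (u 2)⁻¹ * u 1, 1] : Fin 3 → F3) = (u 2)⁻¹ • u := by
      funext i
      fin_cases i
      · rfl
      · rfl
      · show (1 : F3) = (u 2)⁻¹ • u 2
        rw [smul_eq_mul, inv_mul_cancel₀ hu2ne]
    rw [heq, pe_smul_iff (inv_ne_zero hu2ne)]
    exact pe_mk hu
  · have heq : ((![(u 2)⁻¹ * u 0, (u 2)⁻¹ * u 1], (1 : Fq)) : V6 Fq F3) =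
        (r 2)⁻¹ • vconic Fq F3 M lam r 2 := by
      refine (V6_eq Fq F3 ?_ ?_ ?_).symm
      · rw [smul_V6_fst]
        show algebraMap Fq F3 (r 2)⁻¹ * (lam⁻¹ * M 0 2) = (u 2)⁻¹ * u 0
        rw [map_inv₀, hu2, mul_inv_rev, hudef, ucol_apply]
        ring
      · rw [smul_V6_fst]
        show algebraMap Fq F3 (r 2)⁻¹ * (lam⁻¹ * M 1 2) = (u 2)⁻¹ * u 1
        rw [map_inv₀, hu2, mul_inv_rev, hudef, ucol_apply]
        ring
      · rw [smul_V6_snd]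
        show (r 2)⁻¹ * r 2 = 1
        rw [inv_mul_cancel₀ hr2]
    rw [heq, pe_smul_iff (inv_ne_zero hr2)]
    exact hQ

-- H1d : the infinite nrc point at the infinite parameter
theorem H1d (M : Matrix (Fin 3) (Fin 3) F3)
    {lam : F3} (hlam : lam ≠ 0) (r : Fin 3 → Fq)
    (hr2 : r 2 = 0) (Q : Pt6 Fq F3)
    (hQ : pe Q (vconic Fq F3 M lam r 2)) :
    Q ∈ spreadPts Fq F3 (M 0 2) (M 1 2) := by
  obtain ⟨c, hc, hr⟩ := hQ
  refine ⟨algebraMap Fq F3 c * lam⁻¹, ?_⟩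
  rw [hr]
  refine V6_eq Fq F3 ?_ ?_ ?_
  · rw [smul_V6_fst]
    show algebraMap Fq F3 c * (lam⁻¹ * M 0 2) = algebraMap Fq F3 c * lam⁻¹ * M 0 2
    ring
  · rw [smul_V6_fst]
    show algebraMap Fq F3 c * (lam⁻¹ * M 1 2) = algebraMap Fq F3 c * lam⁻¹ * M 1 2
    ring
  · rw [smul_V6_snd]
    show c * r 2 = (0 : Fq)
    rw [hr2, mul_zero]

-- H2 : the spread plane of a rational infinite point of the conic is in the representation
theorem H2 (M : Matrix (Fin 3) (Fin 3) F3) (hM : IsUnit M.det)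
    {lam : F3} (hlam : lam ≠ 0) (r : Fin 3 → Fq)
    (hrow : ∀ i, M 2 i = lam * algebraMap Fq F3 (r i)) (θ : Fq)
    (hf : r 0 + r 1 * θ + r 2 * θ ^ 2 = 0) (Q : Pt6 Fq F3)
    (hQ : Q ∈ spreadPts Fq F3 ((M.mulVec fun i => algebraMap Fq F3 (![1, θ, θ ^ 2] i)) 0)
      ((M.mulVec fun i => algebraMap Fq F3 (![1, θ, θ ^ 2] i)) 1)) :
    Q ∈ bbExact Fq F3 (conicOf Fq F3 M) := by
  have hu := uvec_ne Fq F3 M hM θ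
  have hu2 := uvec_two Fq F3 M lam r hrow θ
  set u := M.mulVec fun i => algebraMap Fq F3 (![1, θ, θ ^ 2] i) with hudef
  have hu20 : u 2 = 0 := by
    rw [hu2, hf, map_zero, mul_zero]
  refine ⟨Projectivization.mk F3 u hu, ⟨u, Or.inl ⟨θ, hudef⟩, pe_mk hu⟩,
    Or.inr ⟨u 0, u 1, ?_, hQ⟩⟩
  have heq : (![u 0, u 1, 0] : Fin 3 → F3) = u := by
    funext i
    fin_cases i
    · rfl
    · rfl
    · exact hu20.symm
  rw [heq]
  exact pe_mk hu

-- H2c : the spread plane of the infinite point at the infinite parameter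
theorem H2c (M : Matrix (Fin 3) (Fin 3) F3) (hM : IsUnit M.det)
    {lam : F3} (hlam : lam ≠ 0) (r : Fin 3 → Fq)
    (hrow : ∀ i, M 2 i = lam * algebraMap Fq F3 (r i))
    (hr2 : r 2 = 0) (Q : Pt6 Fq F3)
    (hQ : Q ∈ spreadPts Fq F3 (M 0 2) (M 1 2)) :
    Q ∈ bbExact Fq F3 (conicOf Fq F3 M) := by
  have hu := ucol_ne F3 M hM
  set u := M.mulVec ![0, 0, 1] with hudef
  have hu20 : u 2 = 0 := by
    rw [hudef, ucol_apply, hrow, hr2, map_zero, mul_zero]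
  refine ⟨Projectivization.mk F3 u hu, ⟨u, Or.inr hudef, pe_mk hu⟩,
    Or.inr ⟨M 0 2, M 1 2, ?_, hQ⟩⟩
  have heq : (![M 0 2, M 1 2, 0] : Fin 3 → F3) = u := by
    funext i
    fin_cases i
    · show M 0 2 = u 0
      rw [hudef, ucol_apply]
    · show M 1 2 = u 1
      rw [hudef, ucol_apply]
    · exact hu20.symm
  rw [heq]
  exact pe_mk hu

end AuxH
section AuxH3

variable (Fq F3 : Type) [Field Fq] [Field F3] [Fintype Fq] [Fintype F3] [Algebra Fq F3]

theorem alg_eq_zero' {c : Fq} (hc : algebraMap Fq F3 c = 0) : c = 0 :=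
  (algebraMap Fq F3).injective (by rw [hc, map_zero])

theorem H3 (M : Matrix (Fin 3) (Fin 3) F3) (hM : IsUnit M.det)
    {lam : F3} (hlam : lam ≠ 0) (r : Fin 3 → Fq)
    (hrow : ∀ i, M 2 i = lam * algebraMap Fq F3 (r i)) (Q : Pt6 Fq F3)
    (hQ : Q ∈ bbExact Fq F3 (conicOf Fq F3 M)) :
    (∃ θ : Fq, pe Q (∑ i : Fin 3, θ ^ (i : ℕ) • vconic Fq F3 M lam r i)) ∨
    pe Q (vconic Fq F3 M lam r 2) ∨
    (∃ θ : Fq, r 0 + r 1 * θ + r 2 * θ ^ 2 = 0 ∧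
      Q ∈ spreadPts Fq F3 ((M.mulVec fun i => algebraMap Fq F3 (![1, θ, θ ^ 2] i)) 0)
        ((M.mulVec fun i => algebraMap Fq F3 (![1, θ, θ ^ 2] i)) 1)) ∨
    (r 2 = 0 ∧ Q ∈ spreadPts Fq F3 (M 0 2) (M 1 2)) := by
  obtain ⟨P, ⟨u, humem, hpeP⟩, hbr⟩ := hQ
  rcases humem with ⟨θ, rfl⟩ | rfl
  · -- u = uvec θ
    have hu2 := uvec_two Fq F3 M lam r hrow θ
    set u := M.mulVec fun i => algebraMap Fq F3 (![1, θ, θ ^ 2] i) with hudef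
    rcases hbr with ⟨x, y, hPxy, hQxy⟩ | ⟨x, y, hPxy, hQsp⟩
    · obtain ⟨c, hc, heq⟩ := pe_unique hpeP hPxy
      have h2 : (1 : F3) = c * u 2 := by simpa using congrFun heq 2
      have hx : x = c * u 0 := by simpa using congrFun heq 0
      have hy : y = c * u 1 := by simpa using congrFun heq 1
      have hu2ne : u 2 ≠ 0 := by
        intro h
        rw [h, mul_zero] at h2
        exact one_ne_zero h2
      have hfne : r 0 + r 1 * θ + r 2 * θ ^ 2 ≠ 0 := by
        intro hf
        apply hu2ne
        rw [hu2, hf, map_zero, mul_zero]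
      have hcval : c = (u 2)⁻¹ := eq_inv_of_mul_eq_one_left h2.symm
      left
      refine ⟨θ, ?_⟩
      have heq2 : ((![x, y], (1 : Fq)) : V6 Fq F3) =
          (r 0 + r 1 * θ + r 2 * θ ^ 2)⁻¹ •
            (∑ i : Fin 3, θ ^ (i : ℕ) • vconic Fq F3 M lam r i) := by
        rw [Asum_eq]
        refine (V6_eq Fq F3 ?_ ?_ ?_).symm
        · rw [smul_V6_fst]
          show algebraMap Fq F3 (r 0 + r 1 * θ + r 2 * θ ^ 2)⁻¹ * (lam⁻¹ * u 0) = x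
          rw [hx, hcval, map_inv₀, hu2, mul_inv_rev]
          ring
        · rw [smul_V6_fst]
          show algebraMap Fq F3 (r 0 + r 1 * θ + r 2 * θ ^ 2)⁻¹ * (lam⁻¹ * u 1) = y
          rw [hy, hcval, map_inv₀, hu2, mul_inv_rev]
          ring
        · rw [smul_V6_snd]
          show (r 0 + r 1 * θ + r 2 * θ ^ 2)⁻¹ * (r 0 + r 1 * θ + r 2 * θ ^ 2) = 1
          rw [inv_mul_cancel₀ hfne]
      rw [heq2] at hQxy
      exact (pe_smul_iff (inv_ne_zero hfne)).mp hQxy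
    · obtain ⟨c, hc, heq⟩ := pe_unique hpeP hPxy
      have h2 : (0 : F3) = c * u 2 := by simpa using congrFun heq 2
      have hx : x = c * u 0 := by simpa using congrFun heq 0
      have hy : y = c * u 1 := by simpa using congrFun heq 1
      have hu20 : u 2 = 0 := by
        rcases mul_eq_zero.mp h2.symm with h | h
        · exact absurd h hc
        · exact h
      have hf : r 0 + r 1 * θ + r 2 * θ ^ 2 = 0 := by
        rw [hu2] at hu20
        rcases mul_eq_zero.mp hu20 with h | h
        · exact absurd h hlam
        · exact alg_eq_zero' Fq F3 h
      right; right; left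
      refine ⟨θ, hf, ?_⟩
      rw [hx, hy] at hQsp
      rwa [spreadPts_smul hc] at hQsp
  · -- u = M.mulVec ![0,0,1]
    set u := M.mulVec ![0, 0, 1] with hudef
    have hu2 : u 2 = lam * algebraMap Fq F3 (r 2) := by
      rw [hudef, ucol_apply, hrow]
    have hu0 : u 0 = M 0 2 := by rw [hudef, ucol_apply]
    have hu1 : u 1 = M 1 2 := by rw [hudef, ucol_apply]
    rcases hbr with ⟨x, y, hPxy, hQxy⟩ | ⟨x, y, hPxy, hQsp⟩
    · obtain ⟨c, hc, heq⟩ := pe_unique hpeP hPxy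
      have h2 : (1 : F3) = c * u 2 := by simpa using congrFun heq 2
      have hx : x = c * u 0 := by simpa using congrFun heq 0
      have hy : y = c * u 1 := by simpa using congrFun heq 1
      have hu2ne : u 2 ≠ 0 := by
        intro h
        rw [h, mul_zero] at h2
        exact one_ne_zero h2
      have hr2 : r 2 ≠ 0 := by
        intro h
        apply hu2ne
        rw [hu2, h, map_zero, mul_zero]
      have hcval : c = (u 2)⁻¹ := eq_inv_of_mul_eq_one_left h2.symm
      right; left
      have heq2 : ((![x, y], (1 : Fq)) : V6 Fq F3) = (r 2)⁻¹ • vconic Fq F3 M lam r 2 := by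
        refine (V6_eq Fq F3 ?_ ?_ ?_).symm
        · rw [smul_V6_fst]
          show algebraMap Fq F3 (r 2)⁻¹ * (lam⁻¹ * M 0 2) = x
          rw [hx, hcval, map_inv₀, hu2, mul_inv_rev, hu0]
          ring
        · rw [smul_V6_fst]
          show algebraMap Fq F3 (r 2)⁻¹ * (lam⁻¹ * M 1 2) = y
          rw [hy, hcval, map_inv₀, hu2, mul_inv_rev, hu1]
          ring
        · rw [smul_V6_snd]
          show (r 2)⁻¹ * r 2 = 1
          rw [inv_mul_cancel₀ hr2]
      rw [heq2] at hQxy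
      exact (pe_smul_iff (inv_ne_zero hr2)).mp hQxy
    · obtain ⟨c, hc, heq⟩ := pe_unique hpeP hPxy
      have h2 : (0 : F3) = c * u 2 := by simpa using congrFun heq 2
      have hx : x = c * u 0 := by simpa using congrFun heq 0
      have hy : y = c * u 1 := by simpa using congrFun heq 1
      have hu20 : u 2 = 0 := by
        rcases mul_eq_zero.mp h2.symm with h | h
        · exact absurd h hc
        · exact h
      have hr2 : r 2 = 0 := by
        rw [hu2] at hu20
        rcases mul_eq_zero.mp hu20 with h | h
        · exact absurd h hlam
        · exact alg_eq_zero' Fq F3 h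
      right; right; right
      refine ⟨hr2, ?_⟩
      rw [hx, hy, hu0, hu1] at hQsp
      rwa [spreadPts_smul hc] at hQsp

end AuxH3
section AuxCount

/-- The linear functional cutting out the subline at infinity. -/
def gfun (Fq : Type) [Field Fq] (r : Fin 3 → Fq) : (Fin 3 → Fq) →ₗ[Fq] Fq where
  toFun a := a 0 * r 0 + a 1 * r 1 + a 2 * r 2
  map_add' a b := by
    simp only [Pi.add_apply]
    ring
  map_smul' m a := by
    simp only [Pi.smul_apply, smul_eq_mul, RingHom.id_apply]
    ring

theorem gfun_ker_finrank (Fq : Type) [Field Fq] {r : Fin 3 → Fq} (hr : r ≠ 0) :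
    Module.finrank Fq (LinearMap.ker (gfun Fq r)) = 2 := by
  obtain ⟨j, hj⟩ : ∃ j, r j ≠ 0 := Function.ne_iff.mp hr
  have hsurj : Function.Surjective (gfun Fq r) := by
    intro cc
    refine ⟨fun i => if i = j then cc * (r j)⁻¹ else 0, ?_⟩
    fin_cases j <;> simp [gfun] <;> simp only [Fin.isValue] at hj <;>
      exact inv_mul_cancel_right₀ (by simpa using hj) cc
  have hrange : LinearMap.range (gfun Fq r) = ⊤ := LinearMap.range_eq_top.mpr hsurj
  have h := LinearMap.finrank_range_add_finrank_ker (gfun Fq r)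
  rw [hrange, finrank_top, Module.finrank_self] at h
  have h3 : Module.finrank Fq (Fin 3 → Fq) = 3 := by simp
  omega

theorem spread_count (Fq F3 : Type) [Field Fq] [Field F3] [Fintype Fq] [Fintype F3]
    [Algebra Fq F3] (M : Matrix (Fin 3) (Fin 3) F3) (hM : IsUnit M.det)
    {lam : F3} (hlam : lam ≠ 0) {r : Fin 3 → Fq} (hr : r ≠ 0)
    (hrow : ∀ i, M 2 i = lam * algebraMap Fq F3 (r i)) :
    {s : Set (Pt6 Fq F3) | IsSpreadPlane Fq F3 s ∧
      ∃ Q ∈ s, Q.rep ∈ Submodule.span Fq (Set.range (vconic Fq F3 M lam r))}.ncard =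
      Fintype.card Fq + 1 := by
  classical
  set g := gfun Fq r with hgdef
  have hker2 := gfun_ker_finrank Fq hr
  let b : Module.Basis (Fin 2) Fq (LinearMap.ker g) := Module.finBasisOfFinrankEq Fq _ hker2
  -- the parametrising family of kernel points
  let aK : Option Fq → LinearMap.ker g := fun t => t.elim (b 1) (fun t0 => b 0 + t0 • b 1)
  let avec : Option Fq → (Fin 3 → Fq) := fun t => (aK t : Fin 3 → Fq)
  have r00 : (b.repr (b 0)) 0 = 1 := by
    rw [Module.Basis.repr_self]
    exact Finsupp.single_eq_same
  have r10 : (b.repr (b 1)) 0 = 0 := by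
    rw [Module.Basis.repr_self]
    exact Finsupp.single_eq_of_ne (by decide)
  have r01 : (b.repr (b 0)) 1 = 0 := by
    rw [Module.Basis.repr_self]
    exact Finsupp.single_eq_of_ne (by decide)
  have r11 : (b.repr (b 1)) 1 = 1 := by
    rw [Module.Basis.repr_self]
    exact Finsupp.single_eq_same
  have reprA : ∀ t0 : Fq, (b.repr (b 0 + t0 • b 1)) 0 = 1 := by
    intro t0
    rw [map_add, map_smul, Finsupp.add_apply, Finsupp.smul_apply, r00, r10, smul_zero,
      add_zero]
  have reprB : ∀ t0 : Fq, (b.repr (b 0 + t0 • b 1)) 1 = t0 := by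
    intro t0
    rw [map_add, map_smul, Finsupp.add_apply, Finsupp.smul_apply, r01, r11, smul_eq_mul,
      mul_one, zero_add]
  have haK0 : ∀ t, aK t ≠ 0 := by
    rintro (_ | t0) h0
    · exact Module.Basis.ne_zero b 1 h0
    · have h0' : b 0 + t0 • b 1 = 0 := h0
      have h2 : (b.repr (b 0 + t0 • b 1)) 0 = (b.repr 0) 0 :=
        congrArg (fun z => (b.repr z) 0) h0'
      have hz : (b.repr (0 : LinearMap.ker g)) 0 = 0 := by
        rw [b.repr.map_zero]
        rfl
      rw [reprA, hz] at h2
      exact one_ne_zero h2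
  have havec0 : ∀ t, avec t ≠ 0 := by
    intro t h0
    exact haK0 t (Subtype.ext h0)
  have hdep : ∀ t t' (ν : Fq), ν ≠ 0 → aK t = ν • aK t' → t = t' := by
    rintro (_ | t0) (_ | t0') ν hν hEq
    · rfl
    · have hEq' : b 1 = ν • (b 0 + t0' • b 1) := hEq
      have h : (b.repr (b 1)) 0 = (b.repr (ν • (b 0 + t0' • b 1))) 0 :=
        congrArg (fun z => (b.repr z) 0) hEq' 
      rw [r10, map_smul, Finsupp.smul_apply, reprA, smul_eq_mul, mul_one] at h
      exact absurd h.symm hν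
    · have hEq' : b 0 + t0 • b 1 = ν • b 1 := hEq
      have h : (b.repr (b 0 + t0 • b 1)) 0 = (b.repr (ν • b 1)) 0 :=
        congrArg (fun z => (b.repr z) 0) hEq' 
      rw [reprA, map_smul, Finsupp.smul_apply, r10, smul_zero] at h
      exact absurd h one_ne_zero
    · have hEq' : b 0 + t0 • b 1 = ν • (b 0 + t0' • b 1) := hEq
      have h0 : (b.repr (b 0 + t0 • b 1)) 0 = (b.repr (ν • (b 0 + t0' • b 1))) 0 :=
        congrArg (fun z => (b.repr z) 0) hEq'
      have h1 : (b.repr (b 0 + t0 • b 1)) 1 = (b.repr (ν • (b 0 + t0' • b 1))) 1 :=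
        congrArg (fun z => (b.repr z) 1) hEq' 
      rw [reprA, map_smul, Finsupp.smul_apply, reprA, smul_eq_mul, mul_one] at h0
      rw [reprB, map_smul, Finsupp.smul_apply, reprB, smul_eq_mul] at h1
      rw [← h0, one_mul] at h1
      rw [h1]
  have hgker : ∀ t, avec t 0 * r 0 + avec t 1 * r 1 + avec t 2 * r 2 = 0 := by
    intro t
    exact LinearMap.mem_ker.mp (aK t).2
  -- the corresponding vectors in F3
  let Mv : Option Fq → (Fin 3 → F3) := fun t => M.mulVec fun i => algebraMap Fq F3 (avec t i)
  have hMv2 : ∀ t, Mv t 2 = 0 := by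
    intro t
    have : Mv t 2 = lam * algebraMap Fq F3
        (avec t 0 * r 0 + avec t 1 * r 1 + avec t 2 * r 2) := by
      simp only [Mv, Matrix.mulVec, dotProduct, Fin.sum_univ_three, hrow,
        map_add, map_mul]
      ring
    rw [this, hgker, map_zero, mul_zero]
  have hMvne : ∀ t, Mv t ≠ 0 := by
    intro t h0
    obtain ⟨j, hj⟩ : ∃ j, avec t j ≠ 0 := Function.ne_iff.mp (havec0 t)
    have := congrFun (mulVec_eq_zero hM h0) j
    simp only [Pi.zero_apply] at this
    exact hj ((algebraMap Fq F3).injective (by rw [this, map_zero]))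
  have hMv01 : ∀ t, ¬(Mv t 0 = 0 ∧ Mv t 1 = 0) := by
    rintro t ⟨h0, h1⟩
    apply hMvne t
    funext i
    fin_cases i
    · exact h0
    · exact h1
    · exact hMv2 t
  let φ : Option Fq → Set (Pt6 Fq F3) := fun t => spreadPts Fq F3 (Mv t 0) (Mv t 1)
  -- the sum vectors
  have hsum : ∀ t, ∑ i : Fin 3, avec t i • vconic Fq F3 M lam r i =
      ((![lam⁻¹ * Mv t 0, lam⁻¹ * Mv t 1], 0) : V6 Fq F3) := by
    intro t
    rw [vconic_sum]
    refine V6_eq Fq F3 rfl rfl ?_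
    exact hgker t
  have hwne : ∀ t, ((![lam⁻¹ * Mv t 0, lam⁻¹ * Mv t 1], 0) : V6 Fq F3) ≠ 0 := by
    intro t h0
    apply hMv01 t
    constructor
    · have := congrFun (congrArg Prod.fst h0) 0
      simp only [Matrix.cons_val_zero, Prod.fst_zero, Pi.zero_apply] at this
      rcases mul_eq_zero.mp this with h | h
      · exact absurd h (inv_ne_zero hlam)
      · exact h
    · have := congrFun (congrArg Prod.fst h0) 1
      simp only [Matrix.cons_val_one, Matrix.head_cons, Prod.fst_zero, Pi.zero_apply] at this
      rcases mul_eq_zero.mp this with h | h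
      · exact absurd h (inv_ne_zero hlam)
      · exact h
  -- range of φ is the target set
  have hrange : {s : Set (Pt6 Fq F3) | IsSpreadPlane Fq F3 s ∧
      ∃ Q ∈ s, Q.rep ∈ Submodule.span Fq (Set.range (vconic Fq F3 M lam r))} =
      Set.range φ := by
    apply Set.Subset.antisymm
    · rintro s ⟨⟨x, y, hxy, rfl⟩, Q, ⟨l, hl⟩, hQspan⟩
      have hlne : l ≠ 0 := by
        intro h0
        apply Q.rep_nonzero
        rw [hl, h0]
        refine V6_eq Fq F3 ?_ ?_ rfl <;> simp
      obtain ⟨a, ha⟩ := (Submodule.mem_span_range_iff_exists_fun Fq).mp hQspan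
      rw [vconic_sum, hl] at ha
      have c0 : lam⁻¹ * (M.mulVec fun i => algebraMap Fq F3 (a i)) 0 = l * x := by
        simpa using congrFun (congrArg Prod.fst ha) 0
      have c1 : lam⁻¹ * (M.mulVec fun i => algebraMap Fq F3 (a i)) 1 = l * y := by
        simpa using congrFun (congrArg Prod.fst ha) 1
      have c2 : a 0 * r 0 + a 1 * r 1 + a 2 * r 2 = 0 := congrArg Prod.snd ha
      have haker : a ∈ LinearMap.ker g := by
        rw [LinearMap.mem_ker]
        simpa [hgdef, gfun] using c2
      have hane : a ≠ 0 := by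
        intro h0
        apply Q.rep_nonzero
        rw [hl]
        have hz : ∀ k : Fin 3, (M.mulVec fun i => algebraMap Fq F3 (a i)) k = 0 := by
          intro k
          rw [h0]
          simp [Matrix.mulVec, dotProduct, Fin.sum_univ_three]
        refine V6_eq Fq F3 ?_ ?_ rfl
        · show l * x = (0 : V6 Fq F3).1 0
          rw [← c0, hz 0, mul_zero]
          rfl
        · show l * y = (0 : V6 Fq F3).1 1
          rw [← c1, hz 1, mul_zero]
          rfl
      set aS : LinearMap.ker g := ⟨a, haker⟩ with haSdef
      have haSne : aS ≠ 0 := by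
        intro h0
        apply hane
        have := congrArg (fun z : LinearMap.ker g => (z : Fin 3 → Fq)) h0
        simpa [haSdef] using this
      have hab : (b.repr aS) 0 • b 0 + (b.repr aS) 1 • b 1 = aS := by
        have := b.sum_repr aS
        rwa [Fin.sum_univ_two] at this
      set α := (b.repr aS) 0 with hαdef
      set β := (b.repr aS) 1 with hβdef
      -- common scaling argument
      have main : ∀ t : Option Fq, ∀ γ : Fq, γ ≠ 0 → (γ • aK t : LinearMap.ker g) = aS →
          spreadPts Fq F3 x y ∈ Set.range φ := by
        intro t γ hγ hEq
        refine ⟨t, ?_⟩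
        have havec : ∀ i, γ * avec t i = a i := by
          intro i
          have h := congrArg (fun z : LinearMap.ker g => (z : Fin 3 → Fq) i) hEq
          simp only [Submodule.coe_smul, Pi.smul_apply, smul_eq_mul] at h
          exact h
        have hMv_eq : ∀ k : Fin 3, algebraMap Fq F3 γ * Mv t k =
            (M.mulVec fun i => algebraMap Fq F3 (a i)) k := by
          intro k
          simp only [Mv, Matrix.mulVec, dotProduct, Fin.sum_univ_three]
          rw [← havec 0, ← havec 1, ← havec 2]
          simp only [map_mul]
          ring
        have c0' : (M.mulVec fun i => algebraMap Fq F3 (a i)) 0 = lam * (l * x) := by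
          rw [← c0, ← mul_assoc, mul_inv_cancel₀ hlam, one_mul]
        have c1' : (M.mulVec fun i => algebraMap Fq F3 (a i)) 1 = lam * (l * y) := by
          rw [← c1, ← mul_assoc, mul_inv_cancel₀ hlam, one_mul]
        have hx' : Mv t 0 = (algebraMap Fq F3 γ)⁻¹ * (lam * (l * x)) := by
          have h := hMv_eq 0
          rw [c0'] at h
          rw [← h, ← mul_assoc, inv_mul_cancel₀ (alg_ne_zero Fq F3 hγ), one_mul]
        have hy' : Mv t 1 = (algebraMap Fq F3 γ)⁻¹ * (lam * (l * y)) := by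
          have h := hMv_eq 1
          rw [c1'] at h
          rw [← h, ← mul_assoc, inv_mul_cancel₀ (alg_ne_zero Fq F3 hγ), one_mul]
        have hc : (algebraMap Fq F3 γ)⁻¹ * lam * l ≠ 0 :=
          mul_ne_zero (mul_ne_zero (inv_ne_zero (alg_ne_zero Fq F3 hγ)) hlam) hlne
        show spreadPts Fq F3 (Mv t 0) (Mv t 1) = spreadPts Fq F3 x y
        have hxeq : Mv t 0 = (algebraMap Fq F3 γ)⁻¹ * lam * l * x := by
          rw [hx']; ring
        have hyeq : Mv t 1 = (algebraMap Fq F3 γ)⁻¹ * lam * l * y := by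
          rw [hy']; ring
        rw [hxeq, hyeq, spreadPts_smul hc]
      by_cases hα0 : α ≠ 0
      · refine main (some (β / α)) α hα0 ?_
        rw [show (aK (some (β / α)) : LinearMap.ker g) = b 0 + (β / α) • b 1 from rfl,
          smul_add, smul_smul, mul_div_cancel₀ _ hα0, ← hab]
      · push_neg at hα0
        have hβ0 : β ≠ 0 := by
          intro h0
          apply haSne
          rw [← hab, hα0, h0, zero_smul, zero_smul, add_zero]
        refine main none β hβ0 ?_
        rw [show (aK none : LinearMap.ker g) = b 1 from rfl, ← hab, hα0, zero_smul, zero_add]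
    · rintro s ⟨t, rfl⟩
      refine ⟨⟨Mv t 0, Mv t 1, hMv01 t, rfl⟩, ?_⟩
      refine ⟨Projectivization.mk Fq ((![lam⁻¹ * Mv t 0, lam⁻¹ * Mv t 1], 0) : V6 Fq F3)
        (hwne t), ?_, ?_⟩
      · obtain ⟨c, hc, hrep⟩ := pe_mk (K := Fq) (hwne t)
        refine ⟨algebraMap Fq F3 c * lam⁻¹, ?_⟩
        rw [hrep]
        refine V6_eq Fq F3 ?_ ?_ ?_
        · rw [smul_V6_fst]
          show algebraMap Fq F3 c * (lam⁻¹ * Mv t 0) = algebraMap Fq F3 c * lam⁻¹ * Mv t 0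
          ring
        · rw [smul_V6_fst]
          show algebraMap Fq F3 c * (lam⁻¹ * Mv t 1) = algebraMap Fq F3 c * lam⁻¹ * Mv t 1
          ring
        · rw [smul_V6_snd]
          show c * 0 = (0 : Fq)
          rw [mul_zero]
      · obtain ⟨c, hc, hrep⟩ := pe_mk (K := Fq) (hwne t)
        rw [hrep, ← hsum t]
        refine Submodule.smul_mem _ _ (Submodule.sum_mem _ fun i _ => ?_)
        exact Submodule.smul_mem _ _ (Submodule.subset_span (Set.mem_range_self i))
  -- injectivity of φ
  have hinj : Function.Injective φ := by
    intro t t' hφ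
    have hQt : Projectivization.mk Fq ((![lam⁻¹ * Mv t 0, lam⁻¹ * Mv t 1], 0) : V6 Fq F3)
        (hwne t) ∈ φ t := by
      obtain ⟨c, hc, hrep⟩ := pe_mk (K := Fq) (hwne t)
      refine ⟨algebraMap Fq F3 c * lam⁻¹, ?_⟩
      rw [hrep]
      refine V6_eq Fq F3 ?_ ?_ ?_
      · rw [smul_V6_fst]
        show algebraMap Fq F3 c * (lam⁻¹ * Mv t 0) = algebraMap Fq F3 c * lam⁻¹ * Mv t 0
        ring
      · rw [smul_V6_fst]
        show algebraMap Fq F3 c * (lam⁻¹ * Mv t 1) = algebraMap Fq F3 c * lam⁻¹ * Mv t 1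
        ring
      · rw [smul_V6_snd]
        show c * 0 = (0 : Fq)
        rw [mul_zero]
    rw [hφ] at hQt
    obtain ⟨l', hl'⟩ := hQt
    obtain ⟨c, hc, hrep⟩ := pe_mk (K := Fq) (hwne t)
    rw [hrep] at hl'
    have hcF : algebraMap Fq F3 c ≠ 0 := alg_ne_zero Fq F3 hc
    have e0 : algebraMap Fq F3 c * (lam⁻¹ * Mv t 0) = l' * Mv t' 0 := by
      have := congrFun (congrArg Prod.fst hl') 0
      rw [smul_V6_fst] at this
      simpa using this
    have e1 : algebraMap Fq F3 c * (lam⁻¹ * Mv t 1) = l' * Mv t' 1 := by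
      have := congrFun (congrArg Prod.fst hl') 1
      rw [smul_V6_fst] at this
      simpa using this
    set μ := (algebraMap Fq F3 c * lam⁻¹)⁻¹ * l' with hμdef
    have hMveq : ∀ i, Mv t i = μ * Mv t' i := by
      intro i
      fin_cases i
      · show Mv t 0 = μ * Mv t' 0
        calc Mv t 0 = (algebraMap Fq F3 c)⁻¹ *
              (lam * (algebraMap Fq F3 c * (lam⁻¹ * Mv t 0))) := by
              field_simp
          _ = (algebraMap Fq F3 c)⁻¹ * (lam * (l' * Mv t' 0)) := by rw [e0]
          _ = μ * Mv t' 0 := by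
              rw [hμdef, mul_inv_rev, inv_inv]
              ring
      · show Mv t 1 = μ * Mv t' 1
        calc Mv t 1 = (algebraMap Fq F3 c)⁻¹ *
              (lam * (algebraMap Fq F3 c * (lam⁻¹ * Mv t 1))) := by
              field_simp
          _ = (algebraMap Fq F3 c)⁻¹ * (lam * (l' * Mv t' 1)) := by rw [e1]
          _ = μ * Mv t' 1 := by
              rw [hμdef, mul_inv_rev, inv_inv]
              ring
      · show Mv t 2 = μ * Mv t' 2
        rw [hMv2, hMv2, mul_zero]
    have hmul : M.mulVec (fun i => algebraMap Fq F3 (avec t i)) =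
        M.mulVec (fun i => μ * algebraMap Fq F3 (avec t' i)) := by
      funext j
      have h := hMveq j
      simp only [Mv] at h
      rw [h]
      simp only [Matrix.mulVec, dotProduct, Fin.sum_univ_three]
      ring
    have hvec := mulVec_injective hM hmul
    obtain ⟨j, hj⟩ : ∃ j, avec t' j ≠ 0 := Function.ne_iff.mp (havec0 t')
    have hjF : algebraMap Fq F3 (avec t' j) ≠ 0 := alg_ne_zero Fq F3 hj
    set ν := avec t j * (avec t' j)⁻¹ with hνdef
    have hμν : μ = algebraMap Fq F3 ν := by
      have h := congrFun hvec j
      rw [hνdef, map_mul, map_inv₀, h, mul_assoc, mul_inv_cancel₀ hjF, mul_one]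
    have hcomp : ∀ i, avec t i = ν * avec t' i := by
      intro i
      have h := congrFun hvec i
      rw [hμν] at h
      exact (algebraMap Fq F3).injective (by rw [map_mul]; exact h)
    have hνne : ν ≠ 0 := by
      intro h0
      apply havec0 t
      funext i
      rw [hcomp i, h0, zero_mul]
      rfl
    have hlift : aK t = ν • aK t' := by
      apply Subtype.ext
      show avec t = ν • avec t'
      funext i
      rw [Pi.smul_apply, smul_eq_mul]
      exact hcomp i
    exact hdep t t' ν hνne hlift
  rw [hrange, ← Set.image_univ, Set.ncard_image_of_injective _ hinj, Set.ncard_univ,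
    Nat.card_eq_fintype_card, Fintype.card_option]

end AuxCount
section AuxPackage

variable (Fq F3 F6 : Type) [Field Fq] [Field F3] [Field F6]
  [Fintype Fq] [Algebra Fq F3] [Algebra F3 F6] [Algebra Fq F6] [IsScalarTower Fq F3 F6]

theorem Wplane_package {x y : F3} (hxy : ¬(x = 0 ∧ y = 0)) :
    ∃ W : Submodule F6 (V66 F6), Module.finrank F6 W = 3 ∧
      (∀ w ∈ W, (w : V66 F6).2 = 0) ∧
      {Q : Pt6 Fq F3 | iota66 Fq F3 F6 Q.rep ∈ W} = spreadPts Fq F3 x y := by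
  refine ⟨LinearMap.range (Wlin (Fintype.card Fq) F6 fun k => algebraMap F3 F6 (![x, y] k)),
    ?_, Wlin_snd _ F6 _, ?_⟩
  · rcases not_and_or.mp hxy with hx | hy
    · have hz : algebraMap F3 F6 ((![x, y] : Fin 2 → F3) 0) ≠ 0 := by
        simp only [Matrix.cons_val_zero]
        exact fun h => hx ((algebraMap F3 F6).injective (by rw [h, map_zero]))
      exact Wlin_finrank (Fintype.card Fq) F6 (k0 := 0) hz
    · have hz : algebraMap F3 F6 ((![x, y] : Fin 2 → F3) 1) ≠ 0 := by
        simp only [Matrix.cons_val_one, Matrix.head_cons, Matrix.cons_val_zero]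
        exact fun h => hy ((algebraMap F3 F6).injective (by rw [h, map_zero]))
      exact Wlin_finrank (Fintype.card Fq) F6 (k0 := 1) hz
  · ext Q
    exact mem_Wplane_iota Fq F3 F6 hxy Q

theorem W0_package :
    ∃ W : Submodule F6 (V66 F6), Module.finrank F6 W = 3 ∧
      (∀ w ∈ W, (w : V66 F6).2 = 0) ∧
      {Q : Pt6 Fq F3 | iota66 Fq F3 F6 Q.rep ∈ W} = (∅ : Set (Pt6 Fq F3)) := by
  refine ⟨LinearMap.range (W0lin F6), W0lin_finrank F6, W0lin_snd F6, ?_⟩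
  ext Q
  simp only [Set.mem_setOf_eq, Set.mem_empty_iff_false, iff_false]
  exact W0_no_rational Fq F3 F6 Q

theorem not00_of (u : Fin 3 → F3) (hu : u ≠ 0) (h2 : u 2 = 0) :
    ¬(u 0 = 0 ∧ u 1 = 0) := by
  rintro ⟨ha, hb⟩
  apply hu
  funext i
  fin_cases i
  · exact ha
  · exact hb
  · exact h2

end AuxPackage

/-- Theorem 4.1: for an `F_q`-conic in a secant `F_q`-subplane, `V([C])`
decomposes into a non-degenerate conic lying in a plane of PG(6,q)∖Σ∞ meeting q+1 spread
planes, together with two planes in Σ∞ (possibly repeated, possibly in the extension). -/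
theorem fqConic_secant_decomposition (Fq F3 F6 : Type) [Field Fq] [Field F3] [Field F6]
    [Fintype Fq] [Fintype F3] [Fintype F6]
    [Algebra Fq F3] [Algebra F3 F6] [Algebra Fq F6] [IsScalarTower Fq F3 F6]
    (h3 : Fintype.card F3 = Fintype.card Fq ^ 3)
    (h6 : Fintype.card F6 = Fintype.card Fq ^ 6)
    (M : Matrix (Fin 3) (Fin 3) F3) (hM : IsUnit M.det)
    (hsec : SecantSubplane Fq F3 M) :
    ∃ v : Fin (2 + 1) → V6 Fq F3, LinearIndependent Fq v ∧
      (¬ ∀ i, (v i).2 = 0) ∧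
      {s : Set (Pt6 Fq F3) | IsSpreadPlane Fq F3 s ∧
        ∃ Q ∈ s, Q.rep ∈ Submodule.span Fq (Set.range v)}.ncard = Fintype.card Fq + 1 ∧
      ∃ W1 W2 : Submodule F6 (V66 F6),
        Module.finrank F6 W1 = 3 ∧ Module.finrank F6 W2 = 3 ∧
        (∀ w ∈ W1, (w : V66 F6).2 = 0) ∧ (∀ w ∈ W2, (w : V66 F6).2 = 0) ∧
        bbExact Fq F3 (conicOf Fq F3 M) =
          nrcPts6 Fq F3 v ∪ {Q | iota66 Fq F3 F6 Q.rep ∈ W1} ∪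
            {Q | iota66 Fq F3 F6 Q.rep ∈ W2} := by
  classical
  obtain ⟨lam, hlam, r, hrne, hrow⟩ := secant_row Fq F3 hM hsec
  refine ⟨vconic Fq F3 M lam r, vconic_li Fq F3 M hM hlam r hrow, ?_, ?_, ?_⟩
  · intro h
    apply hrne
    funext i
    exact h i
  · exact spread_count Fq F3 M hM hlam hrne hrow
  · -- the two planes at infinity
    have hcol2 : r 2 = 0 → ¬(M 0 2 = 0 ∧ M 1 2 = 0) := by
      intro h2
      have hne := ucol_ne F3 M hM
      have h22 : (M.mulVec ![0, 0, 1]) 2 = 0 := by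
        rw [ucol_apply, hrow, h2, map_zero, mul_zero]
      have h := not00_of F3 _ hne h22
      rwa [ucol_apply, ucol_apply] at h
    have huvec : ∀ θ : Fq, r 0 + r 1 * θ + r 2 * θ ^ 2 = 0 →
        ¬((M.mulVec fun i => algebraMap Fq F3 (![1, θ, θ ^ 2] i)) 0 = 0 ∧
          (M.mulVec fun i => algebraMap Fq F3 (![1, θ, θ ^ 2] i)) 1 = 0) := by
      intro θ hf
      refine not00_of F3 _ (uvec_ne Fq F3 M hM θ) ?_
      rw [uvec_two Fq F3 M lam r hrow θ, hf, map_zero, mul_zero]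
    by_cases h2 : r 2 = 0
    · by_cases h1 : r 1 = 0
      · -- no affine-parameter roots, only the column point at infinity
        have h0 : r 0 ≠ 0 := by
          intro h0
          apply hrne
          funext i
          fin_cases i
          · exact h0
          · exact h1
          · exact h2
        have hnof : ∀ θ : Fq, r 0 + r 1 * θ + r 2 * θ ^ 2 ≠ 0 := by
          intro θ hf
          rw [h1, h2] at hf
          apply h0
          simpa using hf
        obtain ⟨W, hW3, hWsnd, hWset⟩ := Wplane_package Fq F3 F6 (hcol2 h2)
        refine ⟨W, W, hW3, hW3, hWsnd, hWsnd, ?_⟩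
        rw [hWset]
        apply Set.Subset.antisymm
        · intro Q hQ
          rcases H3 Fq F3 M hM hlam r hrow Q hQ with ⟨θ, hθ⟩ | hv2 | ⟨θ, hf, _⟩ | ⟨_, hsp⟩
          · exact Or.inl (Or.inl (Or.inl ⟨θ, hθ⟩))
          · exact Or.inl (Or.inl (Or.inr hv2))
          · exact absurd hf (hnof θ)
          · exact Or.inr hsp
        · rintro Q (((⟨θ, hθ⟩ | hv2) | hsp) | hsp)
          · exact H1a Fq F3 M hM hlam r hrow θ (hnof θ) Q hθ
          · exact H2c Fq F3 M hM hlam r hrow h2 Q (H1d Fq F3 M hlam r h2 Q hv2)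
          · exact H2c Fq F3 M hM hlam r hrow h2 Q hsp
          · exact H2c Fq F3 M hM hlam r hrow h2 Q hsp
      · -- one root θ1 and the column point at infinity
        set θ1 : Fq := -(r 0 / r 1) with hθ1def
        have hθ1 : r 0 + r 1 * θ1 + r 2 * θ1 ^ 2 = 0 := by
          rw [hθ1def, h2]
          field_simp
          ring
        have huniq : ∀ θ : Fq, r 0 + r 1 * θ + r 2 * θ ^ 2 = 0 → θ = θ1 := by
          intro θ hf
          rw [h2] at hf
          rw [hθ1def]
          field_simp
          first
          | linear_combination hf
          | linear_combination -hf
          | linear_combination r 1 * hf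
          | linear_combination -(r 1) * hf
        obtain ⟨W1, hW13, hW1snd, hW1set⟩ := Wplane_package Fq F3 F6 (huvec θ1 hθ1)
        obtain ⟨W2, hW23, hW2snd, hW2set⟩ := Wplane_package Fq F3 F6 (hcol2 h2)
        refine ⟨W1, W2, hW13, hW23, hW1snd, hW2snd, ?_⟩
        rw [hW1set, hW2set]
        apply Set.Subset.antisymm
        · intro Q hQ
          rcases H3 Fq F3 M hM hlam r hrow Q hQ with ⟨θ, hθ⟩ | hv2 | ⟨θ, hf, hsp⟩ | ⟨_, hsp⟩
          · exact Or.inl (Or.inl (Or.inl ⟨θ, hθ⟩))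
          · exact Or.inl (Or.inl (Or.inr hv2))
          · rw [huniq θ hf] at hsp
            exact Or.inl (Or.inr hsp)
          · exact Or.inr hsp
        · rintro Q (((⟨θ, hθ⟩ | hv2) | hsp) | hsp)
          · by_cases hf : r 0 + r 1 * θ + r 2 * θ ^ 2 = 0
            · exact H2 Fq F3 M hM hlam r hrow θ hf Q (H1b Fq F3 M hlam r hrow θ hf Q hθ)
            · exact H1a Fq F3 M hM hlam r hrow θ hf Q hθ
          · exact H2c Fq F3 M hM hlam r hrow h2 Q (H1d Fq F3 M hlam r h2 Q hv2)
          · exact H2 Fq F3 M hM hlam r hrow θ1 hθ1 Q hsp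
          · exact H2c Fq F3 M hM hlam r hrow h2 Q hsp
    · by_cases hroot : ∃ θ : Fq, r 0 + r 1 * θ + r 2 * θ ^ 2 = 0
      · -- two roots θ1, θ2
        obtain ⟨θ1, hθ1⟩ := hroot
        set θ2 : Fq := -(r 1 / r 2) - θ1 with hθ2def
        have hs : r 2 * θ2 = -(r 1) - r 2 * θ1 := by
          rw [hθ2def]
          field_simp
        have hθ2 : r 0 + r 1 * θ2 + r 2 * θ2 ^ 2 = 0 := by
          have hG : r 2 * (r 0 + r 1 * θ2 + r 2 * θ2 ^ 2) = 0 := by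
            linear_combination (r 2 * θ2 - r 2 * θ1) * hs + r 2 * hθ1
          rcases mul_eq_zero.mp hG with h | h
          · exact absurd h h2
          · exact h
        have huniq : ∀ θ : Fq, r 0 + r 1 * θ + r 2 * θ ^ 2 = 0 → θ = θ1 ∨ θ = θ2 := by
          intro θ hf
          have hdiff : r 2 * ((θ - θ1) * (θ - θ2)) = 0 := by
            linear_combination hf - hθ1 - (θ - θ1) * hs
          rcases mul_eq_zero.mp hdiff with h | h
          · exact absurd h h2
          · rcases mul_eq_zero.mp h with h | h
            · exact Or.inl (sub_eq_zero.mp h)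
            · exact Or.inr (sub_eq_zero.mp h)
        obtain ⟨W1, hW13, hW1snd, hW1set⟩ := Wplane_package Fq F3 F6 (huvec θ1 hθ1)
        obtain ⟨W2, hW23, hW2snd, hW2set⟩ := Wplane_package Fq F3 F6 (huvec θ2 hθ2)
        refine ⟨W1, W2, hW13, hW23, hW1snd, hW2snd, ?_⟩
        rw [hW1set, hW2set]
        apply Set.Subset.antisymm
        · intro Q hQ
          rcases H3 Fq F3 M hM hlam r hrow Q hQ with ⟨θ, hθ⟩ | hv2 | ⟨θ, hf, hsp⟩ | ⟨hr2, _⟩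
          · exact Or.inl (Or.inl (Or.inl ⟨θ, hθ⟩))
          · exact Or.inl (Or.inl (Or.inr hv2))
          · rcases huniq θ hf with rfl | rfl
            · exact Or.inl (Or.inr hsp)
            · exact Or.inr hsp
          · exact absurd hr2 h2
        · rintro Q (((⟨θ, hθ⟩ | hv2) | hsp) | hsp)
          · by_cases hf : r 0 + r 1 * θ + r 2 * θ ^ 2 = 0
            · exact H2 Fq F3 M hM hlam r hrow θ hf Q (H1b Fq F3 M hlam r hrow θ hf Q hθ)
            · exact H1a Fq F3 M hM hlam r hrow θ hf Q hθ
          · exact H1c Fq F3 M hM hlam r hrow h2 Q hv2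
          · exact H2 Fq F3 M hM hlam r hrow θ1 hθ1 Q hsp
          · exact H2 Fq F3 M hM hlam r hrow θ2 hθ2 Q hsp
      · -- no points at infinity : two conjugate planes in the extension
        push_neg at hroot
        obtain ⟨W, hW3, hWsnd, hWset⟩ := W0_package Fq F3 F6
        refine ⟨W, W, hW3, hW3, hWsnd, hWsnd, ?_⟩
        rw [hWset]
        apply Set.Subset.antisymm
        · intro Q hQ
          rcases H3 Fq F3 M hM hlam r hrow Q hQ with ⟨θ, hθ⟩ | hv2 | ⟨θ, hf, _⟩ | ⟨hr2, _⟩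
          · exact Or.inl (Or.inl (Or.inl ⟨θ, hθ⟩))
          · exact Or.inl (Or.inl (Or.inr hv2))
          · exact absurd hf (hroot θ)
          · exact absurd hr2 h2
        · rintro Q (((⟨θ, hθ⟩ | hv2) | hsp) | hsp)
          · exact H1a Fq F3 M hM hlam r hrow θ (hroot θ) Q hθ
          · exact H1c Fq F3 M hM hlam r hrow h2 Q hv2
          · exact absurd hsp (Set.notMem_empty Q)
          · exact absurd hsp (Set.notMem_empty Q)
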